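/- arXiv:2104.08764 — 9 statements merged into one kernel-verified Lean document; each statement's English description precedes it below -/
import Mathlib

section
/- Let A be a positive definite symmetric d×d real matrix, b ∈ ℝ^d, and let G be a symmetric d×d matrix with A ⪯ G. For x ∈ ℝ^d set x₊ := x − G⁻¹(Ax − b). Then λ_f(x₊) ≤ σ_A(G) · λ_f(x). -/
open Matrix
open scoped MatrixOrder

section Helpers

variable {d : ℕ}

private lemma trace_transpose_mul_self_eq' (M : Matrix (Fin d) (Fin d) ℝ) :
    (Mᵀ * M).trace = ∑ j, ∑ i, (M i j)^2 := by
  simp [Matrix.trace, Matrix.mul_apply, Matrix.diag, sq]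

private lemma trace_cycle_key' (B C : Matrix (Fin d) (Fin d) ℝ) :
    (Bᵀ * B * (Cᵀ * C)).trace = ((B * Cᵀ)ᵀ * (B * Cᵀ)).trace := by
  rw [transpose_mul, transpose_transpose, ← mul_assoc, Matrix.trace_mul_cycle,
    ← mul_assoc, ← mul_assoc]

private lemma trace_mul_psd_nonneg {P Q : Matrix (Fin d) (Fin d) ℝ}
    (hP : P.PosSemidef) (hQ : Q.PosSemidef) : 0 ≤ (P * Q).trace := by
  obtain ⟨B, rfl⟩ := CStarAlgebra.nonneg_iff_eq_star_mul_self.mp hP.nonneg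
  obtain ⟨C, rfl⟩ := CStarAlgebra.nonneg_iff_eq_star_mul_self.mp hQ.nonneg
  simp only [star_eq_conjTranspose, conjTranspose_eq_transpose_of_trivial]
  rw [trace_cycle_key', trace_transpose_mul_self_eq']
  positivity

private lemma trace_mul_le_trace_mul_trace' {P Q : Matrix (Fin d) (Fin d) ℝ}
    (hP : P.PosSemidef) (hQ : Q.PosSemidef) : (P * Q).trace ≤ P.trace * Q.trace := by
  obtain ⟨B, rfl⟩ := CStarAlgebra.nonneg_iff_eq_star_mul_self.mp hP.nonneg
  obtain ⟨C, rfl⟩ := CStarAlgebra.nonneg_iff_eq_star_mul_self.mp hQ.nonneg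
  simp only [star_eq_conjTranspose, conjTranspose_eq_transpose_of_trivial]
  rw [trace_cycle_key', trace_transpose_mul_self_eq',
    trace_transpose_mul_self_eq', trace_transpose_mul_self_eq']
  calc ∑ j, ∑ i, ((B * Cᵀ) i j)^2
      ≤ ∑ j, ∑ i, (∑ k, (B i k)^2) * (∑ k, (C j k)^2) := by
        refine Finset.sum_le_sum fun j _ => Finset.sum_le_sum fun i _ => ?_
        have := Finset.sum_mul_sq_le_sq_mul_sq Finset.univ (fun k => B i k) (fun k => C j k)
        simpa [Matrix.mul_apply] using this
    _ = (∑ i, ∑ k, (B i k)^2) * (∑ j, ∑ k, (C j k)^2) := by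
        rw [Finset.sum_comm, ← Finset.sum_mul_sum]
    _ = (∑ j, ∑ i, (B i j)^2) * (∑ j, ∑ i, (C i j)^2) := by
        rw [Finset.sum_comm (f := fun i k => (B i k)^2),
          Finset.sum_comm (f := fun j k => (C j k)^2)]

private lemma posSemidef_vecMulVec' (v : Fin d → ℝ) : (vecMulVec v v).PosSemidef := by
  refine PosSemidef.of_dotProduct_mulVec_nonneg ?_ ?_
  · ext i j
    simp [vecMulVec_apply, conjTranspose_apply, mul_comm]
  · intro x
    have h1 : (vecMulVec v v) *ᵥ x = fun i => v i * (v ⬝ᵥ x) := by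
      ext i
      simp [mulVec, vecMulVec_apply, dotProduct, Finset.mul_sum, mul_assoc]
    rw [h1]
    have h2 : (star x) ⬝ᵥ (fun i => v i * (v ⬝ᵥ x)) = (x ⬝ᵥ v) * (v ⬝ᵥ x) := by
      simp only [dotProduct, star_trivial, Finset.sum_mul]
      exact Finset.sum_congr rfl fun i _ => by ring
    rw [h2, dotProduct_comm x v]
    exact mul_self_nonneg _

private lemma trace_mul_vecMulVec' (K : Matrix (Fin d) (Fin d) ℝ) (v : Fin d → ℝ) :
    (K * vecMulVec v v).trace = v ⬝ᵥ (K *ᵥ v) := by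
  simp only [Matrix.trace, Matrix.diag, Matrix.mul_apply, vecMulVec_apply, dotProduct,
    mulVec, Finset.mul_sum]
  exact Finset.sum_congr rfl fun i _ => Finset.sum_congr rfl fun j _ => by ring

private lemma trace_vecMulVec' (v : Fin d → ℝ) : (vecMulVec v v).trace = v ⬝ᵥ v := by
  simp [Matrix.trace, Matrix.diag, vecMulVec_apply, dotProduct]

private lemma dot_mulVec_le_trace' {K : Matrix (Fin d) (Fin d) ℝ}
    (hK : K.PosSemidef) (v : Fin d → ℝ) :
    v ⬝ᵥ (K *ᵥ v) ≤ K.trace * (v ⬝ᵥ v) := by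
  rw [← trace_mul_vecMulVec', ← trace_vecMulVec' v]
  exact trace_mul_le_trace_mul_trace' hK (posSemidef_vecMulVec' v)

private lemma conj_dot' {S : Matrix (Fin d) (Fin d) ℝ} (M : Matrix (Fin d) (Fin d) ℝ)
    (hSsymm : Sᵀ = S) (g : Fin d → ℝ) :
    g ⬝ᵥ ((S⁻¹ * M * S⁻¹) *ᵥ g) = (S⁻¹ *ᵥ g) ⬝ᵥ (M *ᵥ (S⁻¹ *ᵥ g)) := by
  rw [← Matrix.mulVec_mulVec, ← Matrix.mulVec_mulVec, Matrix.dotProduct_mulVec]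
  congr 1
  rw [← vecMul_transpose, transpose_nonsing_inv, hSsymm]

end Helpers

/-- `σ_A(G) = tr((G - A) A⁻¹)`. -/
noncomputable def sigmaA {d : ℕ} (A G : Matrix (Fin d) (Fin d) ℝ) : ℝ :=
  ((G - A) * A⁻¹).trace

/-- `λ_f(x) = sqrt((Ax - b)ᵀ A⁻¹ (Ax - b))` for the quadratic `f(x) = ½ xᵀAx - bᵀx`. -/
noncomputable def lambdaF {d : ℕ} (A : Matrix (Fin d) (Fin d) ℝ) (b x : Fin d → ℝ) : ℝ :=
  Real.sqrt ((A *ᵥ x - b) ⬝ᵥ (A⁻¹ *ᵥ (A *ᵥ x - b)))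

/-- One quasi-Newton step for a quadratic:
`λ_f(x₊) ≤ σ_A(G) ⬝ λ_f(x)` where `x₊ = x − G⁻¹(Ax − b)`. -/
theorem lambda_decrease_quadratic
    {d : ℕ} {A G : Matrix (Fin d) (Fin d) ℝ}
    (hA : A.PosDef) (hAsymm : A.IsSymm) (hGsymm : G.IsSymm) (hGA : (G - A).PosSemidef)
    (b x : Fin d → ℝ) :
    lambdaF A b (x - G⁻¹ *ᵥ (A *ᵥ x - b)) ≤ sigmaA A G * lambdaF A b x := by
  classical
  have hGpd : G.PosDef := by
    have := hA.add_posSemidef hGA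
    rwa [add_sub_cancel] at this
  letI := hA.isUnit.invertible
  letI := hGpd.isUnit.invertible
  set S := CFC.sqrt A with hSdef
  have hS : S * S = A := CFC.sqrt_mul_sqrt_self A hA.posSemidef.nonneg
  have hSherm : S.IsHermitian := (CFC.sqrt_nonneg A).posSemidef.1
  have hSsymm : Sᵀ = S := by
    rw [← conjTranspose_eq_transpose_of_trivial]; exact hSherm
  have hSunit : IsUnit S.det := by
    have h1 : S.det * S.det = A.det := by rw [← det_mul, hS]
    have h2 := hA.isUnit
    rw [Matrix.isUnit_iff_isUnit_det, ← h1] at h2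
    exact isUnit_of_mul_isUnit_left h2
  letI := ((Matrix.isUnit_iff_isUnit_det S).mpr hSunit).invertible
  set N : Matrix (Fin d) (Fin d) ℝ := A⁻¹ - G⁻¹ with hNdef
  have hAinv_symm : (A⁻¹)ᵀ = A⁻¹ := by rw [transpose_nonsing_inv, hAsymm.eq]
  have hGinv_symm : (G⁻¹)ᵀ = G⁻¹ := by rw [transpose_nonsing_inv, hGsymm.eq]
  have hNsymm : Nᵀ = N := by rw [hNdef, transpose_sub, hAinv_symm, hGinv_symm]
  have hGAsymm : (G - A)ᵀ = G - A := by rw [transpose_sub, hGsymm.eq, hAsymm.eq]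
  -- N is positive semidefinite
  have eN : N = G⁻¹ * (G - A) * G⁻¹ + G⁻¹ * ((G - A) * A⁻¹ * (G - A)) * G⁻¹ := by
    have e2 : (G - A) * A⁻¹ * (G - A) = G * A⁻¹ * G - G - G + A := by
      simp only [Matrix.sub_mul, Matrix.mul_sub, Matrix.mul_inv_of_invertible,
        Matrix.inv_mul_cancel_right_of_invertible, Matrix.one_mul, Matrix.mul_one]
      abel
    rw [e2, hNdef]
    simp only [Matrix.sub_mul, Matrix.mul_sub, Matrix.add_mul, Matrix.mul_add,
      Matrix.mul_inv_of_invertible, Matrix.inv_mul_of_invertible,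
      Matrix.inv_mul_cancel_right_of_invertible, Matrix.inv_mul_cancel_left_of_invertible,
      Matrix.mul_inv_cancel_right_of_invertible, Matrix.mul_inv_cancel_left_of_invertible,
      Matrix.one_mul, Matrix.mul_one, mul_assoc]
    abel
  have hNpsd : N.PosSemidef := by
    rw [eN]
    have h1 : (G⁻¹ * (G - A) * G⁻¹).PosSemidef := by
      have := hGA.mul_mul_conjTranspose_same G⁻¹
      rwa [conjTranspose_eq_transpose_of_trivial, hGinv_symm] at this
    have h2 : ((G - A) * A⁻¹ * (G - A)).PosSemidef := by
      have := (hA.inv.posSemidef).mul_mul_conjTranspose_same (G - A)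
      rwa [conjTranspose_eq_transpose_of_trivial, hGAsymm] at this
    have h3 : (G⁻¹ * ((G - A) * A⁻¹ * (G - A)) * G⁻¹).PosSemidef := by
      have := h2.mul_mul_conjTranspose_same G⁻¹
      rwa [conjTranspose_eq_transpose_of_trivial, hGinv_symm] at this
    exact h1.add h3
  set H : Matrix (Fin d) (Fin d) ℝ := S * N * S with hHdef
  have hHpsd : H.PosSemidef := by
    have := hNpsd.mul_mul_conjTranspose_same S
    rwa [conjTranspose_eq_transpose_of_trivial, hSsymm] at this
  -- trace facts
  have htrH : H.trace = (N * A).trace := by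
    rw [hHdef, Matrix.trace_mul_cycle, hS, Matrix.trace_mul_comm]
  have htrH_le : H.trace ≤ sigmaA A G := by
    have key : 0 ≤ ((G - A) * N).trace := trace_mul_psd_nonneg hGA hNpsd
    have expand : ((G - A) * N).trace = sigmaA A G - (N * A).trace := by
      rw [hNdef, sigmaA]
      simp only [Matrix.mul_sub, Matrix.sub_mul, Matrix.mul_inv_of_invertible,
        Matrix.inv_mul_of_invertible, trace_sub]
      rw [Matrix.trace_mul_comm G⁻¹ A]
    rw [htrH]
    linarith [expand ▸ key]
  have htrH_nonneg : 0 ≤ H.trace := by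
    have := trace_mul_psd_nonneg hHpsd (Matrix.PosSemidef.one (n := Fin d) (R := ℝ))
    rwa [mul_one] at this
  have hsig : 0 ≤ sigmaA A G := trace_mul_psd_nonneg hGA hA.inv.posSemidef
  -- vectors
  set g : Fin d → ℝ := A *ᵥ x - b with hgdef
  set u : Fin d → ℝ := S⁻¹ *ᵥ g with hudef
  have hAinv_eq : A⁻¹ = S⁻¹ * 1 * S⁻¹ := by
    rw [← hS, Matrix.mul_inv_rev, mul_one]
  have key1 : g ⬝ᵥ (A⁻¹ *ᵥ g) = u ⬝ᵥ u := by
    rw [hAinv_eq, conj_dot' _ hSsymm, one_mulVec]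
  have key2 : A *ᵥ (x - G⁻¹ *ᵥ g) - b = (A * N) *ᵥ g := by
    rw [Matrix.mulVec_sub, Matrix.mulVec_mulVec]
    rw [hNdef, Matrix.mul_sub, Matrix.mul_inv_of_invertible, Matrix.sub_mulVec,
      Matrix.one_mulVec, hgdef]
    abel
  have hHH : H * H = S * (N * A * N) * S := by
    rw [hHdef, ← hS]; noncomm_ring
  have hNAN : S⁻¹ * (H * H) * S⁻¹ = N * A * N := by
    rw [hHH, ← mul_assoc S⁻¹ (S * (N * A * N)) S,
      Matrix.inv_mul_cancel_left_of_invertible, Matrix.mul_inv_cancel_right_of_invertible]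
  have key3 : ((A * N) *ᵥ g) ⬝ᵥ (A⁻¹ *ᵥ ((A * N) *ᵥ g)) = u ⬝ᵥ ((H * H) *ᵥ u) := by
    rw [Matrix.mulVec_mulVec, Matrix.inv_mul_cancel_left_of_invertible]
    rw [Matrix.dotProduct_mulVec, Matrix.vecMul_mulVec, transpose_mul, hNsymm, hAsymm.eq,
      ← Matrix.dotProduct_mulVec g (N * A * N) g, ← hNAN, conj_dot' _ hSsymm]
  -- main quantitative bound
  have hu_nonneg : 0 ≤ u ⬝ᵥ u := by
    simp only [dotProduct]
    exact Finset.sum_nonneg fun i _ => mul_self_nonneg _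
  have main : ((A * N) *ᵥ g) ⬝ᵥ (A⁻¹ *ᵥ ((A * N) *ᵥ g))
      ≤ (sigmaA A G)^2 * (g ⬝ᵥ (A⁻¹ *ᵥ g)) := by
    rw [key3, key1]
    have h1 : u ⬝ᵥ ((H * H) *ᵥ u) ≤ (H * H).trace * (u ⬝ᵥ u) := by
      have : (H * H).PosSemidef := by
        have := hHpsd.pow 2
        rwa [pow_two] at this
      exact dot_mulVec_le_trace' this u
    have h2 : (H * H).trace ≤ H.trace * H.trace := trace_mul_le_trace_mul_trace' hHpsd hHpsd
    have h3 : H.trace * H.trace ≤ sigmaA A G * sigmaA A G :=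
      mul_le_mul htrH_le htrH_le htrH_nonneg hsig
    calc u ⬝ᵥ ((H * H) *ᵥ u) ≤ (H * H).trace * (u ⬝ᵥ u) := h1
      _ ≤ (sigmaA A G * sigmaA A G) * (u ⬝ᵥ u) := by
          apply mul_le_mul_of_nonneg_right _ hu_nonneg
          linarith
      _ = (sigmaA A G)^2 * (u ⬝ᵥ u) := by ring
  -- conclude
  simp only [lambdaF]
  rw [key2]
  calc Real.sqrt (((A * N) *ᵥ g) ⬝ᵥ (A⁻¹ *ᵥ ((A * N) *ᵥ g)))
      ≤ Real.sqrt ((sigmaA A G)^2 * (g ⬝ᵥ (A⁻¹ *ᵥ g))) := Real.sqrt_le_sqrt main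
    _ = sigmaA A G * Real.sqrt (g ⬝ᵥ (A⁻¹ *ᵥ g)) := by
        rw [Real.sqrt_mul (sq_nonneg _), Real.sqrt_sq hsig]
end

section
/- Let A be a positive definite symmetric d×d real matrix and G_0 a symmetric matrix with G_0 ⪰ A. For 0 ≤ k < d, let u_k = e_{i_k} be a standard basis vector chosen greedily, i.e. (G_k − A)_{i_k, i_k} ≥ (G_k − A)_{j,j} for every index j, and set G_{k+1} := SR1(G_k, A, u_k). Then for every 0 ≤ k ≤ d: G_k ⪰ A and τ_A(G_k) ≤ (1 − k/d) · τ_A(G_0); in particular G_d = A. -/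
open Matrix

/-- `τ_A(G) = tr(G - A)`. -/
noncomputable def tauA {d : ℕ} (A G : Matrix (Fin d) (Fin d) ℝ) : ℝ :=
  (G - A).trace

/-- The SR1 quasi-Newton update. -/
noncomputable def SR1 {d : ℕ} (G A : Matrix (Fin d) (Fin d) ℝ) (u : Fin d → ℝ) :
    Matrix (Fin d) (Fin d) ℝ :=
  if G *ᵥ u = A *ᵥ u then G
  else G - (u ⬝ᵥ ((G - A) *ᵥ u))⁻¹ • vecMulVec ((G - A) *ᵥ u) (u ᵥ* (G - A))

lemma myPSD_form {H : Matrix (Fin d) (Fin d) ℝ} (hH : H.PosSemidef) (x : Fin d → ℝ) :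
    0 ≤ x ⬝ᵥ H *ᵥ x := by simpa using hH.dotProduct_mulVec_nonneg x

lemma mySymm {H : Matrix (Fin d) (Fin d) ℝ} (hH : H.PosSemidef) (a b : Fin d) :
    H a b = H b a := by
  have := congrFun (congrFun hH.1 a) b
  simpa [conjTranspose_apply] using this.symm

lemma myDot_symm {H : Matrix (Fin d) (Fin d) ℝ} (hH : H.PosSemidef) (x y : Fin d → ℝ) :
    x ⬝ᵥ H *ᵥ y = y ⬝ᵥ H *ᵥ x := by
  rw [dotProduct_mulVec, ← mulVec_transpose, dotProduct_comm]
  congr 1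
  have : Hᵀ = H := by
    ext a b; simpa [transpose_apply] using mySymm hH b a
  rw [this]

lemma myCS {H : Matrix (Fin d) (Fin d) ℝ} (hH : H.PosSemidef) (x y : Fin d → ℝ) :
    (x ⬝ᵥ H *ᵥ y)^2 ≤ (x ⬝ᵥ H *ᵥ x) * (y ⬝ᵥ H *ᵥ y) := by
  have key : ∀ t : ℝ, 0 ≤ (y ⬝ᵥ H *ᵥ y) * (t*t) + (2 * (x ⬝ᵥ H *ᵥ y)) * t + (x ⬝ᵥ H *ᵥ x) := by
    intro t
    have h0 := myPSD_form hH (x + t • y)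
    have hyx := myDot_symm hH y x
    simp only [dotProduct_add, add_dotProduct, mulVec_add, mulVec_smul, dotProduct_smul,
      smul_dotProduct, smul_eq_mul] at h0
    rw [hyx] at h0
    nlinarith [h0]
  have := discrim_le_zero key
  rw [discrim] at this
  nlinarith [this]

lemma myEntry (H : Matrix (Fin d) (Fin d) ℝ) (a b : Fin d) :
    (Pi.single a 1 : Fin d → ℝ) ⬝ᵥ H *ᵥ (Pi.single b 1) = H a b := by
  simp [mulVec_single, single_dotProduct]

lemma myDiagZero {H : Matrix (Fin d) (Fin d) ℝ} (hH : H.PosSemidef) {a : Fin d}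
    (ha : H a a = 0) (b : Fin d) : H a b = 0 := by
  have h := myCS hH (Pi.single a 1) (Pi.single b 1)
  rw [myEntry, myEntry, myEntry, ha] at h
  nlinarith [h]

lemma myDiagNonneg {H : Matrix (Fin d) (Fin d) ℝ} (hH : H.PosSemidef) (a : Fin d) :
    0 ≤ H a a := by
  have := myPSD_form hH (Pi.single a 1)
  rwa [myEntry] at this

lemma myVecMulVec_mulVec (a b x : Fin d → ℝ) :
    vecMulVec a b *ᵥ x = (b ⬝ᵥ x) • a := by
  ext j
  simp only [vecMulVec_apply, mulVec, dotProduct, Pi.smul_apply, smul_eq_mul, Finset.sum_mul,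
    Finset.mul_sum]
  exact Finset.sum_congr rfl fun l _ => by ring

lemma myUpd_apply (H : Matrix (Fin d) (Fin d) ℝ) (m j l : Fin d) :
    (H - (H m m)⁻¹ • vecMulVec (H *ᵥ Pi.single m 1) ((Pi.single m 1 : Fin d → ℝ) ᵥ* H)) j l
      = H j l - (H m m)⁻¹ * (H j m * H m l) := by
  simp only [Matrix.sub_apply, Matrix.smul_apply, vecMulVec_apply, mulVec_single_one, single_one_vecMul, col_apply, row_apply, mul_one,
    one_mul, smul_eq_mul]

lemma myStepPSD {H : Matrix (Fin d) (Fin d) ℝ} (hH : H.PosSemidef) {m : Fin d} (hm : 0 < H m m) :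
    (H - (H m m)⁻¹ • vecMulVec (H *ᵥ Pi.single m 1)
      ((Pi.single m 1 : Fin d → ℝ) ᵥ* H)).PosSemidef := by
  rw [posSemidef_iff_dotProduct_mulVec]
  constructor
  · show _ᴴ = _
    ext a b
    rw [conjTranspose_apply, myUpd_apply, myUpd_apply, star_trivial,
      mySymm hH b a, mySymm hH b m, mySymm hH m a]
    ring
  · intro x
    rw [star_trivial, sub_mulVec, smul_mulVec, myVecMulVec_mulVec, dotProduct_sub,
      dotProduct_smul, dotProduct_smul]
    set s := x ⬝ᵥ H *ᵥ Pi.single m 1 with hs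
    have hb : (Pi.single m 1 : Fin d → ℝ) ᵥ* H ⬝ᵥ x = s := by
      rw [← dotProduct_mulVec]; exact myDot_symm hH _ _
    rw [hb]
    have hcs := myCS hH x (Pi.single m 1)
    rw [myEntry] at hcs
    have hv : H m m * (H m m)⁻¹ = 1 := mul_inv_cancel₀ hm.ne'
    have hv0 : (0:ℝ) ≤ (H m m)⁻¹ := inv_nonneg.mpr hm.le
    have h1 : (0:ℝ) ≤ ((x ⬝ᵥ H *ᵥ x) * H m m - s^2) * (H m m)⁻¹ :=
      mul_nonneg (sub_nonneg.mpr hcs) hv0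
    have := myPSD_form hH x
    simp only [smul_eq_mul]
    nlinarith [h1, hv]

lemma myStepTrace {H : Matrix (Fin d) (Fin d) ℝ} (hH : H.PosSemidef) {m : Fin d}
    (hm : 0 < H m m) :
    (H - (H m m)⁻¹ • vecMulVec (H *ᵥ Pi.single m 1)
      ((Pi.single m 1 : Fin d → ℝ) ᵥ* H)).trace ≤ H.trace - H m m := by
  have hterm : ∀ j, H j m * H m j = (H m j)^2 := fun j => by rw [mySymm hH j m]; ring
  have hsum : H m m * H m m ≤ ∑ j, H j m * H m j :=
    Finset.single_le_sum (f := fun j => H j m * H m j)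
      (fun j _ => by show (0:ℝ) ≤ H j m * H m j; rw [hterm j]; positivity) (Finset.mem_univ m)
  have htr : (H - (H m m)⁻¹ • vecMulVec (H *ᵥ Pi.single m 1)
      ((Pi.single m 1 : Fin d → ℝ) ᵥ* H)).trace
      = H.trace - (H m m)⁻¹ * ∑ j, H j m * H m j := by
    simp only [Matrix.trace, Matrix.diag]
    rw [Finset.mul_sum, ← Finset.sum_sub_distrib]
    exact Finset.sum_congr rfl fun j _ => by rw [myUpd_apply]
  rw [htr]
  have hv : H m m * (H m m)⁻¹ = 1 := mul_inv_cancel₀ hm.ne'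
  have hv0 : (0:ℝ) ≤ (H m m)⁻¹ := inv_nonneg.mpr hm.le
  nlinarith [mul_le_mul_of_nonneg_left hsum hv0]

/-- Greedy SR1 updates: `τ_A(G_k) ≤ (1 - k/d) τ_A(G_0)` and `G_d = A`. -/
theorem greedy_SR1_matrix_approximation
    {d : ℕ} {A : Matrix (Fin d) (Fin d) ℝ} (hA : A.PosDef) (hAsymm : A.IsSymm)
    {G₀ : Matrix (Fin d) (Fin d) ℝ} (hG₀symm : G₀.IsSymm) (hG₀ : (G₀ - A).PosSemidef)
    (G : ℕ → Matrix (Fin d) (Fin d) ℝ) (i : ℕ → Fin d)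
    (hGinit : G 0 = G₀)
    (hgreedy : ∀ k < d, ∀ j : Fin d, (G k - A) j j ≤ (G k - A) (i k) (i k))
    (hGrec : ∀ k < d, G (k + 1) = SR1 (G k) A (Pi.single (i k) 1)) :
    (∀ k ≤ d, (G k - A).PosSemidef ∧ tauA A (G k) ≤ (1 - (k : ℝ) / d) * tauA A G₀) ∧
      G d = A := by
  have hT0 : (0:ℝ) ≤ (G 0 - A).trace := by
    rw [Matrix.trace]
    exact Finset.sum_nonneg fun j _ => myDiagNonneg (hGinit ▸ hG₀) j
  have key : ∀ k, k ≤ d → (G k - A).PosSemidef ∧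
      (∃ S : Finset (Fin d), S.card = k ∧ ∀ j ∈ S, (G k - A) j j = 0) ∧
      (G k - A).trace ≤ (1 - (k:ℝ)/d) * (G 0 - A).trace := by
    intro k
    induction k with
    | zero => exact fun _ => ⟨hGinit ▸ hG₀, ⟨∅, by simp⟩, by simp⟩
    | succ k ih =>
      intro hk1
      have hk : k < d := hk1
      obtain ⟨hPSD, ⟨S, hScard, hSzero⟩, htr⟩ := ih hk.le
      have hdpos : (0:ℝ) < d := by
        have : 0 < d := by omega
        exact_mod_cast this
      set m := i k with hm
      set u : Fin d → ℝ := Pi.single m 1 with hu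
      have hrec := hGrec k hk
      have htrnn : 0 ≤ (G k - A).trace := by
        rw [Matrix.trace]
        exact Finset.sum_nonneg fun j _ => myDiagNonneg hPSD j
      by_cases hcase : G k *ᵥ u = A *ᵥ u
      · have hG1 : G (k+1) = G k := by rw [hrec, SR1, if_pos hcase]
        have hHu : (G k - A) *ᵥ u = 0 := by rw [sub_mulVec, hcase, sub_self]
        have hmm : (G k - A) m m = 0 := by
          have := congrFun hHu m
          rw [hu, mulVec_single] at this
          simpa using this
        have hall : ∀ j, (G k - A) j j = 0 := fun j =>
          le_antisymm (hmm ▸ hgreedy k hk j) (myDiagNonneg hPSD j)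
        obtain ⟨S', _, hS'card⟩ : ∃ S' ⊆ (Finset.univ : Finset (Fin d)), S'.card = k+1 := by
          apply Finset.exists_subset_card_eq
          simpa using hk1
        refine ⟨hG1 ▸ hPSD, ⟨S', hS'card, fun j _ => by rw [hG1]; exact hall j⟩, ?_⟩
        have hz : (G (k+1) - A).trace = 0 := by
          rw [hG1, Matrix.trace]
          exact Finset.sum_eq_zero fun j _ => hall j
        rw [hz]
        apply mul_nonneg _ hT0
        have hkd : ((k:ℝ)+1) ≤ d := by exact_mod_cast hk1
        have : ((k:ℝ)+1)/d ≤ 1 := by rw [div_le_one hdpos]; linarith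
        push_cast
        linarith
      · have hmpos : 0 < (G k - A) m m := by
          rcases (myDiagNonneg hPSD m).lt_or_eq with h | h
          · exact h
          · exfalso
            apply hcase
            have hrow : ∀ l, (G k - A) m l = 0 := myDiagZero hPSD h.symm
            have : (G k - A) *ᵥ u = 0 := by
              ext j
              rw [hu, mulVec_single]
              simpa [mySymm hPSD j m] using hrow j
            rw [sub_mulVec] at this
            exact sub_eq_zero.mp this
        have hKmm : u ⬝ᵥ ((G k - A) *ᵥ u) = (G k - A) m m := by
          rw [hu]
          simp [mulVec_single, single_dotProduct]
        have hG1 : G (k+1) - A = (G k - A) - ((G k - A) m m)⁻¹ •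
            vecMulVec ((G k - A) *ᵥ u) (u ᵥ* (G k - A)) := by
          rw [hrec]
          rw [SR1, if_neg hcase]
          rw [hKmm, sub_right_comm]
        have happ : ∀ j l, (G (k+1) - A) j l = (G k - A) j l -
            ((G k - A) m m)⁻¹ * ((G k - A) j m * (G k - A) m l) := by
          intro j l
          rw [hG1, hu]
          exact myUpd_apply _ m j l
        have hPSD' : (G (k+1) - A).PosSemidef := by
          rw [hG1, hu]; exact myStepPSD hPSD hmpos
        have hmnotS : m ∉ S := fun hmem => by
          rw [hSzero m hmem] at hmpos; exact lt_irrefl _ hmpos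
        refine ⟨hPSD', ⟨insert m S, ?_, ?_⟩, ?_⟩
        · rw [Finset.card_insert_of_notMem hmnotS, hScard]
        · intro j hj
          rcases Finset.mem_insert.mp hj with rfl | h
          · rw [happ]
            have := hmpos.ne'
            field_simp
            ring
          · have hjm : (G k - A) j m = 0 := myDiagZero hPSD (hSzero j h) m
            rw [happ, hSzero j h, hjm]
            ring
        · have htr' : (G (k+1) - A).trace ≤ (G k - A).trace - (G k - A) m m := by
            rw [hG1, hu]; exact myStepTrace hPSD hmpos
          have hbound : (G k - A).trace ≤ ((d:ℝ) - k) * (G k - A) m m := by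
            have hsplit : (G k - A).trace = ∑ j ∈ Finset.univ \ S, (G k - A) j j := by
              simp only [Matrix.trace, Matrix.diag]
              rw [← Finset.sum_sdiff (Finset.subset_univ S)]
              rw [Finset.sum_eq_zero (fun j hj => hSzero j hj), add_zero]
            rw [hsplit]
            have hcard : (Finset.univ \ S).card = d - k := by
              rw [Finset.card_sdiff_of_subset (Finset.subset_univ S), hScard, Finset.card_univ,
                Fintype.card_fin]
            calc ∑ j ∈ Finset.univ \ S, (G k - A) j j
                ≤ (Finset.univ \ S).card • (G k - A) m m :=
                  Finset.sum_le_card_nsmul _ _ _ (fun j _ => hgreedy k hk j)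
              _ = ((d:ℝ) - k) * (G k - A) m m := by
                  rw [hcard, nsmul_eq_mul, Nat.cast_sub hk.le]
          have hc0 : (0:ℝ) < (d:ℝ) - k := by
            have : (k:ℝ) < d := by exact_mod_cast hk
            linarith
          have hc1 : (0:ℝ) ≤ (d:ℝ) - k - 1 := by
            have : ((k:ℝ)+1) ≤ d := by exact_mod_cast hk1
            linarith
          have hTform : (1 - (k:ℝ)/d) * (G 0 - A).trace
              = (((d:ℝ)-k) * (G 0 - A).trace)/d := by
            field_simp
          have htr2 : (G k - A).trace * d ≤ ((d:ℝ)-k) * (G 0 - A).trace := by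
            rw [hTform, le_div_iff₀ hdpos] at htr; linarith
          have hgoalform : (1 - ((k:ℝ)+1)/d) = (((d:ℝ)-k-1))/d := by
            field_simp
            ring
          push_cast
          rw [hgoalform, div_mul_eq_mul_div, le_div_iff₀ hdpos]
          nlinarith [mul_le_mul_of_nonneg_right htr2 hc1,
            mul_le_mul_of_nonneg_right htr' (mul_nonneg hdpos.le hc0.le),
            mul_le_mul_of_nonneg_right hbound hdpos.le, hc0, hdpos, htrnn, hT0]
  constructor
  · intro k hk
    obtain ⟨hPSDk, _, htrk⟩ := key k hk
    refine ⟨hPSDk, ?_⟩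
    show (G k - A).trace ≤ (1 - (k:ℝ)/d) * (G₀ - A).trace
    rw [← hGinit]
    exact htrk
  · obtain ⟨hPSDd, ⟨S, hScard, hSzero⟩, _⟩ := key d le_rfl
    have hSuniv : S = Finset.univ := Finset.eq_univ_of_card S (by rw [hScard, Fintype.card_fin])
    have hzero : G d - A = 0 := by
      ext a b
      rw [Matrix.zero_apply]
      exact myDiagZero hPSDd (hSzero a (by rw [hSuniv]; exact Finset.mem_univ a)) b
    exact sub_eq_zero.mp hzero
end

section
/- Let ν be a probability measure on ℝ^d with ν({0}) = 0 that is invariant under every orthogonal linear map of ℝ^d (i.e. the pushforward of ν by any orthogonal transformation equals ν). Let R be a real symmetric positive semidefinite d×d matrix of rank r with r ≥ 1. Then ∫ (uᵀ R² u)/(uᵀ R u) · 1_{\{u : Ru ≠ 0\}}(u) dν(u) ≥ tr(R)/r. -/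
open Matrix MeasureTheory

section Auxiliary

variable {d : ℕ}

noncomputable def hh (w : Fin d → ℝ) : Matrix (Fin d) (Fin d) ℝ :=
  1 - (2:ℝ) • vecMulVec w w

lemma hh_orth {w : Fin d → ℝ} (hw : w ⬝ᵥ w = 1) : (hh w)ᵀ * (hh w) = 1 := by
  have ht : (vecMulVec w w)ᵀ = vecMulVec w w := by
    ext i j; simp [vecMulVec_apply, mul_comm]
  have hmul : vecMulVec w w * vecMulVec w w = vecMulVec w w := by
    ext i j
    simp only [mul_apply, vecMulVec_apply]
    have : ∑ k, (w i * w k) * (w k * w j) = (w i * w j) * ∑ k, w k * w k := by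
      rw [Finset.mul_sum]; congr 1; ext k; ring
    rw [this, show (∑ k, w k * w k) = w ⬝ᵥ w from rfl, hw, mul_one]
  have hts : (hh w)ᵀ = hh w := by
    simp [hh, transpose_sub, transpose_smul, ht]
  rw [hts, hh, sub_mul, mul_sub, mul_sub]
  simp only [smul_mul_assoc, mul_smul_comm, smul_smul, hmul, one_mul, mul_one]
  module

lemma vecMulVec_mulVec' (w v : Fin d → ℝ) : vecMulVec w w *ᵥ v = (w ⬝ᵥ v) • w := by
  ext k
  simp only [mulVec, dotProduct, vecMulVec_apply, Pi.smul_apply, smul_eq_mul, Finset.sum_mul,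
    Finset.mul_sum]
  refine Finset.sum_congr rfl fun x _ => by ring

lemma hh_mulVec (w v : Fin d → ℝ) : hh w *ᵥ v = v - (2 * (w ⬝ᵥ v)) • w := by
  rw [hh, sub_mulVec, one_mulVec, smul_mulVec, vecMulVec_mulVec', smul_smul]

/-- The two-coordinate unit vector used for rotations in the (i₀,j) plane. -/
noncomputable def wv (i₀ j : Fin d) (t : ℝ) : Fin d → ℝ :=
  (Real.sqrt (1+t^2))⁻¹ • (Pi.single i₀ 1 : Fin d → ℝ) + (t * (Real.sqrt (1+t^2))⁻¹) • (Pi.single j 1 : Fin d → ℝ)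

lemma sq_c (t : ℝ) : ((Real.sqrt (1+t^2))⁻¹)^2 = (1+t^2)⁻¹ := by
  rw [← Real.sqrt_inv]
  exact Real.sq_sqrt (by positivity)

lemma wv_norm {i₀ j : Fin d} (hij : i₀ ≠ j) (t : ℝ) : wv i₀ j t ⬝ᵥ wv i₀ j t = 1 := by
  set c := (Real.sqrt (1+t^2))⁻¹ with hc
  have h1 : (1+t^2) ≠ 0 := by positivity
  simp only [wv, add_dotProduct, dotProduct_add, smul_dotProduct, dotProduct_smul,
    single_dotProduct, dotProduct_single, smul_eq_mul, Pi.add_apply, Pi.smul_apply,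
    Pi.single_apply, if_pos rfl, if_neg hij, if_neg hij.symm]
  have := sq_c t
  rw [hc] at *
  field_simp
  simp only [ite_true, mul_zero, add_zero, zero_add, mul_one]
  rw [Real.sq_sqrt (by positivity)]
  ring

lemma wv_apply {i₀ j : Fin d} (t : ℝ) (i : Fin d) (h1 : i ≠ i₀) (h2 : i ≠ j) :
    wv i₀ j t i = 0 := by
  simp [wv, Pi.single_apply, if_neg h1, if_neg h2]

lemma wv_dot (i₀ j : Fin d) (t : ℝ) (v : Fin d → ℝ) :
    wv i₀ j t ⬝ᵥ v = (Real.sqrt (1+t^2))⁻¹ * v i₀ + (t * (Real.sqrt (1+t^2))⁻¹) * v j := by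
  simp [wv, add_dotProduct, smul_dotProduct, single_dotProduct]

def ZS (T : Finset (Fin d)) : Set (Fin d → ℝ) := {v | ∀ i ∈ T, v i = 0}

lemma ZS_meas (T : Finset (Fin d)) : MeasurableSet (ZS T) := by
  have : ZS T = ⋂ i ∈ T, {v : Fin d → ℝ | v i = 0} := by ext v; simp [ZS]
  rw [this]
  exact MeasurableSet.biInter (T : Set (Fin d)).to_countable
    fun i _ => measurableSet_eq_fun (measurable_pi_apply i) measurable_const

lemma mulVec_measurable (Q : Matrix (Fin d) (Fin d) ℝ) :
    Measurable (fun v : Fin d → ℝ => Q *ᵥ v) := by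
  exact (Matrix.mulVecLin Q).continuous_of_finiteDimensional.measurable

/-- Key step: rotating shows ν(Z_T) ≤ ν(Z_{T∪{j}}). -/
lemma ZS_step (ν : Measure (Fin d → ℝ)) [IsProbabilityMeasure ν]
    (hinv : ∀ Q : Matrix (Fin d) (Fin d) ℝ, Qᵀ * Q = 1 →
      Measure.map (fun v => Q *ᵥ v) ν = ν)
    {T : Finset (Fin d)} {i₀ j : Fin d} (hi₀ : i₀ ∈ T) (hj : j ∉ T) :
    ν (ZS T) ≤ ν (ZS (insert j T)) := by
  have hij : i₀ ≠ j := fun h => hj (h ▸ hi₀)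
  -- the preimage sets
  set L : ℝ → Set (Fin d → ℝ) := fun t =>
    {v | (∀ i ∈ T, i ≠ i₀ → v i = 0) ∧ (t^2-1) * v i₀ - (2*t) * v j = 0} with hL
  have hLmeas : ∀ t, MeasurableSet (L t) := by
    intro t
    have hrfl : L t = ({v : Fin d → ℝ | ∀ i ∈ T, i ≠ i₀ → v i = 0} ∩
        {v : Fin d → ℝ | (t^2-1) * v i₀ - (2*t) * v j = 0}) := rfl
    rw [hrfl]
    apply MeasurableSet.inter
    · have : {v : Fin d → ℝ | ∀ i ∈ T, i ≠ i₀ → v i = 0}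
          = ⋂ i ∈ T, ⋂ (_ : i ≠ i₀), {v : Fin d → ℝ | v i = 0} := by ext v; simp
      rw [this]
      exact MeasurableSet.biInter (T : Set (Fin d)).to_countable fun i _ =>
        MeasurableSet.iInter fun _ =>
          measurableSet_eq_fun (measurable_pi_apply i) measurable_const
    · exact measurableSet_eq_fun
        (((measurable_pi_apply i₀).const_mul _).sub ((measurable_pi_apply j).const_mul _))
        measurable_const
  -- each L t has the same measure as ZS T
  have hLm : ∀ t : ℝ, ν (L t) = ν (ZS T) := by
    intro t
    have horth := hh_orth (wv_norm hij t)
    have := hinv _ horth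
    have hmeq : ν (ZS T) = ν ((fun v => hh (wv i₀ j t) *ᵥ v) ⁻¹' (ZS T)) := by
      conv_lhs => rw [← this]
      rw [Measure.map_apply (mulVec_measurable _) (ZS_meas T)]
    have hsq := sq_c t
    have h1t : (0:ℝ) < 1 + t^2 := by positivity
    have hcpos : (0:ℝ) < (Real.sqrt (1+t^2))⁻¹ := by
      rw [inv_pos]; exact Real.sqrt_pos.2 h1t
    set c := (Real.sqrt (1+t^2))⁻¹ with hc
    have hpre : (fun v => hh (wv i₀ j t) *ᵥ v) ⁻¹' (ZS T) = L t := by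
      ext v
      simp only [Set.mem_preimage, ZS, Set.mem_setOf_eq, hh_mulVec, Pi.sub_apply, Pi.smul_apply,
        smul_eq_mul, hL]
      constructor
      · rintro h
        have hother : ∀ i ∈ T, i ≠ i₀ → v i = 0 := by
          intro i hiT hne
          have := h i hiT
          rwa [wv_apply t i hne (fun h' => hj (by rwa [h'] at hiT)), mul_zero, sub_zero] at this
        refine ⟨hother, ?_⟩
        have h0 := h i₀ hi₀
        rw [wv_dot] at h0
        have hw0 : wv i₀ j t i₀ = c := by
          simp [wv, Pi.single_apply, hij, hc]
        rw [hw0] at h0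
        -- h0 : v i₀ - 2 * (c * v i₀ + t * c * v j) * c = 0
        -- multiply out using c^2 = (1+t^2)⁻¹
        have expand : v i₀ - 2 * (c * v i₀ + t * c * v j) * c
            = (1 - 2 * c^2) * v i₀ - (2 * t * c^2) * v j := by ring
        rw [expand] at h0
        rw [hsq] at h0
        have hne : (1+t^2) ≠ 0 := ne_of_gt h1t
        field_simp at h0
        nlinarith [h0]
      · rintro ⟨hother, heq⟩ i hiT
        by_cases hi : i = i₀
        · subst hi
          rw [wv_dot]
          have hw0 : wv i j t i = c := by simp [wv, Pi.single_apply, hij, hc]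
          rw [hw0]
          have hvj0 : (t^2-1) * v i = (2*t) * v j := by linarith [heq]
          have expand : v i - 2 * (c * v i + t * c * v j) * c
              = (1 - 2 * c^2) * v i - (2 * t * c^2) * v j := by ring
          rw [expand, hsq]
          have h1 : (1+t^2) ≠ 0 := ne_of_gt h1t
          field_simp
          nlinarith [hvj0]
        · rw [wv_apply t i hi (fun h' => hj (by rwa [h'] at hiT)), mul_zero, sub_zero]
          exact hother i hiT hi
    rw [hmeq, hpre]
  -- disjointness
  have hsub : ∀ t : ℝ, ZS (insert j T) ⊆ L t := by
    intro t v hv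
    have hvi : ∀ i ∈ T, v i = 0 := fun i hi => hv i (Finset.mem_insert_of_mem hi)
    have hvj : v j = 0 := hv j (Finset.mem_insert_self j T)
    exact ⟨fun i hi _ => hvi i hi, by rw [hvi i₀ hi₀, hvj]; ring⟩
  have hdisj : ∀ n m : ℕ, n ≠ m →
      L ((n:ℝ)+1) ∩ L ((m:ℝ)+1) ⊆ ZS (insert j T) := by
    intro n m hnm v ⟨⟨h1, e1⟩, ⟨_, e2⟩⟩
    set a : ℝ := (n:ℝ)+1
    set b : ℝ := (m:ℝ)+1
    have ha : (1:ℝ) ≤ a := by simp only [a]; linarith [Nat.cast_nonneg (α:=ℝ) n]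
    have hb : (1:ℝ) ≤ b := by simp only [b]; linarith [Nat.cast_nonneg (α:=ℝ) m]
    have hab : a ≠ b := by
      simp only [a, b]; exact_mod_cast fun h => hnm (by exact_mod_cast (add_left_injective 1 h))
    have hx : v i₀ = 0 := by
      have key : (a - b) * (a*b + 1) * v i₀ = 0 := by nlinarith [e1, e2]
      have h1 : a - b ≠ 0 := sub_ne_zero.2 hab
      have h2 : a*b + 1 ≠ 0 := by nlinarith
      rcases mul_eq_zero.1 key with h | h
      · rcases mul_eq_zero.1 h with h | h
        · exact absurd h h1
        · exact absurd h h2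
      · exact h
    have hy : v j = 0 := by
      have : (2*a) * v j = 0 := by nlinarith [e1, hx]
      have h2a : (2:ℝ)*a ≠ 0 := by positivity
      exact (mul_eq_zero.1 this).resolve_left h2a
    intro i hi
    rcases Finset.mem_insert.1 hi with h | h
    · rw [h]; exact hy
    · by_cases hii : i = i₀
      · rw [hii]; exact hx
      · exact h1 i h hii
  -- countable disjoint family of equal measure
  set c0 := ν (ZS T) - ν (ZS (insert j T)) with hc0
  by_contra hlt
  push_neg at hlt
  have hc0ne : c0 ≠ 0 := by
    rw [hc0]
    intro h
    exact absurd (tsub_eq_zero_iff_le.1 h) (not_le.2 hlt)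
  set A : ℕ → Set (Fin d → ℝ) := fun n => L ((n:ℝ)+1) \ ZS (insert j T) with hA
  have hAmeas : ∀ n, MeasurableSet (A n) := fun n =>
    (hLmeas _).diff (ZS_meas _)
  have hAdisj : Pairwise (Function.onFun Disjoint A) := by
    intro n m hnm
    simp only [Function.onFun, hA, Set.disjoint_left]
    rintro v ⟨hv1, hv2⟩ ⟨hw1, _⟩
    exact hv2 (hdisj n m hnm ⟨hv1, hw1⟩)
  have hAm : ∀ n, ν (A n) = c0 := by
    intro n
    rw [hA]
    simp only
    rw [measure_diff (hsub _) (ZS_meas _).nullMeasurableSet (measure_ne_top ν _), hLm]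
  have htot : ν (⋃ n, A n) = ∑' _ : ℕ, c0 := by
    rw [measure_iUnion hAdisj hAmeas]
    simp [hAm]
  have : (∑' _ : ℕ, c0) = ⊤ := ENNReal.tsum_const_eq_top_of_ne_zero hc0ne
  rw [this] at htot
  exact absurd htot (by
    intro h
    have := measure_ne_top ν (⋃ n, A n)
    exact this h)

lemma ZS_null (ν : Measure (Fin d → ℝ)) [IsProbabilityMeasure ν]
    (hν0 : ν {0} = 0)
    (hinv : ∀ Q : Matrix (Fin d) (Fin d) ℝ, Qᵀ * Q = 1 →
      Measure.map (fun v => Q *ᵥ v) ν = ν)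
    (T : Finset (Fin d)) (hT : T.Nonempty) : ν (ZS T) = 0 := by
  suffices h : ∀ n (T : Finset (Fin d)), Tᶜ.card = n → T.Nonempty → ν (ZS T) = 0 from
    h Tᶜ.card T rfl hT
  intro n
  induction n with
  | zero =>
    intro T hc _
    have : T = Finset.univ := by
      rw [Finset.card_eq_zero] at hc
      simpa using congrArg (·ᶜ) hc
    subst this
    have : ZS (Finset.univ : Finset (Fin d)) = {0} := by
      ext v
      simp only [ZS, Set.mem_setOf_eq, Finset.mem_univ, forall_true_left, Set.mem_singleton_iff]
      constructor
      · intro h; funext i; exact h i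
      · intro h i; rw [h]; rfl
    rw [this]; exact hν0
  | succ n ih =>
    intro T hc hT
    obtain ⟨i₀, hi₀⟩ := hT
    have hne : Tᶜ.Nonempty := Finset.card_pos.1 (by omega)
    obtain ⟨j, hj⟩ := hne
    have hjT : j ∉ T := Finset.mem_compl.1 hj
    have step := ZS_step ν hinv hi₀ hjT
    have hzero : ν (ZS (insert j T)) = 0 := by
      apply ih
      · rw [Finset.compl_insert, Finset.card_erase_of_mem hj, hc]
        omega
      · exact ⟨i₀, Finset.mem_insert_of_mem hi₀⟩
    exact le_antisymm (hzero ▸ step) zero_le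

lemma wv_apply_i {i j : Fin d} (hij : i ≠ j) (t : ℝ) :
    wv i j t i = (Real.sqrt (1+t^2))⁻¹ := by
  simp [wv, Pi.single_apply, hij, hij.symm]

lemma wv_apply_j {i j : Fin d} (hij : i ≠ j) (t : ℝ) :
    wv i j t j = t * (Real.sqrt (1+t^2))⁻¹ := by
  simp [wv, Pi.single_apply, hij, hij.symm]

lemma hh_swap_mulVec {i j : Fin d} (hij : i ≠ j) (v : Fin d → ℝ) :
    hh (wv i j (-1)) *ᵥ v = v ∘ Equiv.swap i j := by
  have hs : ((Real.sqrt (1+(-1:ℝ)^2))⁻¹)^2 = (2:ℝ)⁻¹ := by rw [sq_c]; norm_num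
  set c := (Real.sqrt (1+(-1:ℝ)^2))⁻¹ with hc
  ext k
  rw [hh_mulVec, wv_dot]
  simp only [Pi.sub_apply, Pi.smul_apply, smul_eq_mul, Function.comp_apply]
  by_cases hk : k = i
  · subst hk
    rw [wv_apply_i hij, Equiv.swap_apply_left, ← hc]
    linear_combination (-2*(v k - v j)) * hs
  · by_cases hk2 : k = j
    · subst hk2
      rw [wv_apply_j hij, Equiv.swap_apply_right, ← hc]
      linear_combination (-2*(v k - v i)) * hs
    · rw [wv_apply _ _ hk hk2, Equiv.swap_apply_of_ne_of_ne hk hk2]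
      ring

theorem diag_case (ν : Measure (Fin d → ℝ)) [IsProbabilityMeasure ν]
    (hν0 : ν {0} = 0)
    (hinv : ∀ Q : Matrix (Fin d) (Fin d) ℝ, Qᵀ * Q = 1 →
      Measure.map (fun v => Q *ᵥ v) ν = ν)
    (lam : Fin d → ℝ) (hlam : ∀ i, 0 ≤ lam i) {r : ℕ} (hr : 1 ≤ r)
    (hcard : (Finset.univ.filter (fun i => lam i ≠ 0)).card = r) :
    (∑ i, lam i) / r ≤
      ∫ v, Set.indicator {v : Fin d → ℝ | diagonal lam *ᵥ v ≠ 0}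
        (fun v => (v ⬝ᵥ ((diagonal lam * diagonal lam) *ᵥ v)) / (v ⬝ᵥ (diagonal lam *ᵥ v))) v ∂ν := by
  classical
  set S := Finset.univ.filter (fun i : Fin d => lam i ≠ 0) with hSdef
  have hSlam : ∀ i ∈ S, 0 < lam i := fun i hi =>
    lt_of_le_of_ne (hlam i) (Ne.symm (by simpa [hSdef] using hi))
  have hSlam0 : ∀ i ∉ S, lam i = 0 := fun i hi => by
    by_contra h; exact hi (by simp [hSdef, h])
  have hS : S.Nonempty := Finset.card_pos.1 (by omega)
  set Pf : (Fin d → ℝ) → ℝ := fun v => ∑ i ∈ S, (v i)^2 with hPf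
  set Nf : (Fin d → ℝ) → ℝ := fun v => ∑ i ∈ S, lam i * (v i)^2 with hNf
  set Mf : (Fin d → ℝ) → ℝ := fun v => ∑ i ∈ S, (lam i)^2 * (v i)^2 with hMf
  -- rewrite the integrand
  have key1 : ∀ v : Fin d → ℝ, v ⬝ᵥ (diagonal lam *ᵥ v) = Nf v := by
    intro v
    rw [hNf]
    simp only [dotProduct, mulVec_diagonal]
    rw [← Finset.sum_subset (Finset.subset_univ S)]
    · exact Finset.sum_congr rfl fun i _ => by ring
    · intro i _ hi; rw [hSlam0 i hi]; ring
  have key2 : ∀ v : Fin d → ℝ, v ⬝ᵥ ((diagonal lam * diagonal lam) *ᵥ v) = Mf v := by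
    intro v
    rw [hMf, diagonal_mul_diagonal]
    simp only [dotProduct, mulVec_diagonal]
    rw [← Finset.sum_subset (Finset.subset_univ S)]
    · exact Finset.sum_congr rfl fun i _ => by ring
    · intro i _ hi; rw [hSlam0 i hi]; ring
  have keyset : {v : Fin d → ℝ | diagonal lam *ᵥ v ≠ 0} = (ZS S)ᶜ := by
    ext v
    simp only [Set.mem_setOf_eq, Set.mem_compl_iff, ZS, ne_eq]
    constructor
    · intro h hs
      apply h
      funext i
      rw [mulVec_diagonal]
      by_cases hi : i ∈ S
      · rw [hs i hi]; simp
      · rw [hSlam0 i hi]; simp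
    · intro h h2
      apply h
      intro i hi
      have := congrFun h2 i
      rw [mulVec_diagonal] at this
      simpa [(hSlam i hi).ne'] using this
  have hPpos : ∀ v ∈ (ZS S)ᶜ, 0 < Pf v := by
    intro v hv
    simp only [Set.mem_compl_iff, ZS, Set.mem_setOf_eq, not_forall] at hv
    obtain ⟨i, hi, hvi⟩ := hv
    exact Finset.sum_pos' (fun k _ => sq_nonneg _) ⟨i, hi, by positivity⟩
  have hNpos : ∀ v ∈ (ZS S)ᶜ, 0 < Nf v := by
    intro v hv
    simp only [Set.mem_compl_iff, ZS, Set.mem_setOf_eq, not_forall] at hv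
    obtain ⟨i, hi, hvi⟩ := hv
    refine Finset.sum_pos' (fun k hk => mul_nonneg (hlam k) (sq_nonneg _)) ⟨i, hi, ?_⟩
    exact mul_pos (hSlam i hi) (by positivity)
  have hCS : ∀ v, (Nf v)^2 ≤ Mf v * Pf v := by
    intro v
    have := Finset.sum_mul_sq_le_sq_mul_sq S (fun i => lam i * v i) (fun i => v i)
    calc (Nf v)^2 = (∑ i ∈ S, (lam i * v i) * v i)^2 := by
          rw [hNf]; congr 1; exact Finset.sum_congr rfl fun i _ => by ring
      _ ≤ (∑ i ∈ S, (lam i * v i)^2) * ∑ i ∈ S, (v i)^2 := this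
      _ = Mf v * Pf v := by
          rw [hMf, hPf]; congr 1; exact Finset.sum_congr rfl fun i _ => by ring
  -- the coordinate weight functions
  set g : Fin d → (Fin d → ℝ) → ℝ :=
    fun i => Set.indicator ((ZS S)ᶜ) (fun v => (v i)^2 / Pf v) with hg
  have hPmeas : Measurable Pf := by
    rw [hPf]
    exact Finset.measurable_sum S fun i _ => (measurable_pi_apply i).pow_const 2
  have hg_meas : ∀ i, Measurable (g i) := by
    intro i
    simp only [hg]
    exact (((measurable_pi_apply i).pow_const 2).div hPmeas).indicator (ZS_meas S).compl
  have hg_bdd : ∀ i ∈ S, ∀ v, g i v ∈ Set.Icc (0:ℝ) 1 := by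
    intro i hi v
    simp only [hg]
    by_cases hv : v ∈ (ZS S)ᶜ
    · rw [Set.indicator_of_mem hv]
      have hP := hPpos v hv
      constructor
      · positivity
      · rw [div_le_one hP, hPf]
        exact Finset.single_le_sum (fun k _ => sq_nonneg (v k)) hi
    · rw [Set.indicator_of_notMem hv]; exact ⟨le_refl 0, zero_le_one⟩
  have hg_int : ∀ i ∈ S, Integrable (g i) ν := by
    intro i hi
    refine ⟨(hg_meas i).aestronglyMeasurable, ?_⟩
    apply MeasureTheory.HasFiniteIntegral.of_bounded (C := 1)
    filter_upwards with v
    obtain ⟨h0, h1⟩ := hg_bdd i hi v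
    rw [Real.norm_eq_abs, abs_of_nonneg h0]; exact h1
  -- swap invariance
  have hswap : ∀ i ∈ S, ∀ j ∈ S, ∫ v, g i v ∂ν = ∫ v, g j v ∂ν := by
    intro i hi j hj
    by_cases hij : i = j
    · rw [hij]
    · have horth := hh_orth (wv_norm hij (-1))
      have hmap := hinv _ horth
      have h1 : ∫ v, g i v ∂ν = ∫ v, g i (hh (wv i j (-1)) *ᵥ v) ∂ν := by
        conv_lhs => rw [← hmap]
        rw [integral_map (mulVec_measurable _).aemeasurable
          (hg_meas i).aestronglyMeasurable]
      rw [h1]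
      congr 1
      funext v
      rw [hh_swap_mulVec hij]
      -- now show g i (v ∘ swap) = g j v
      have hmem : ∀ k, k ∈ S ↔ Equiv.swap i j k ∈ S := by
        intro k
        by_cases hk : k = i
        · subst hk; rw [Equiv.swap_apply_left]; exact ⟨fun _ => hj, fun _ => hi⟩
        · by_cases hk2 : k = j
          · subst hk2; rw [Equiv.swap_apply_right]; exact ⟨fun _ => hi, fun _ => hj⟩
          · rw [Equiv.swap_apply_of_ne_of_ne hk hk2]
      have hPswap : Pf (v ∘ Equiv.swap i j) = Pf v := by
        rw [hPf]
        exact Finset.sum_equiv (Equiv.swap i j) (fun k => (hmem k)) (fun k _ => rfl)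
      have hZswap : (v ∘ Equiv.swap i j) ∈ (ZS S)ᶜ ↔ v ∈ (ZS S)ᶜ := by
        simp only [Set.mem_compl_iff, ZS, Set.mem_setOf_eq, not_iff_not]
        constructor
        · intro h k hk
          have := h (Equiv.swap i j k) ((hmem k).1 hk)
          simpa using this
        · intro h k hk
          exact h (Equiv.swap i j k) ((hmem k).1 hk)
      simp only [hg]
      by_cases hv : v ∈ (ZS S)ᶜ
      · rw [Set.indicator_of_mem (hZswap.2 hv), Set.indicator_of_mem hv, hPswap]
        simp only [Function.comp_apply, Equiv.swap_apply_left]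
      · rw [Set.indicator_of_notMem (fun h => hv (hZswap.1 h)),
          Set.indicator_of_notMem hv]
  -- sum of g over S
  have hZSnull : ν (ZS S) = 0 := ZS_null ν hν0 hinv S hS
  have hsum : ∀ v, ∑ i ∈ S, g i v = Set.indicator ((ZS S)ᶜ) (fun _ => (1:ℝ)) v := by
    intro v
    by_cases hv : v ∈ (ZS S)ᶜ
    · rw [Set.indicator_of_mem hv]
      simp only [hg]
      simp only [Set.indicator_of_mem hv]
      rw [← Finset.sum_div, hPf, div_self (ne_of_gt (hPpos v hv))]
    · rw [Set.indicator_of_notMem hv]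
      simp only [hg]
      simp only [Set.indicator_of_notMem hv]
      exact Finset.sum_const_zero
  have hint_one : ∫ v, Set.indicator ((ZS S)ᶜ) (fun _ => (1:ℝ)) v ∂ν = 1 := by
    rw [MeasureTheory.integral_indicator_const (1:ℝ) (ZS_meas S).compl]
    rw [measureReal_def, measure_compl (ZS_meas S) (measure_ne_top ν _), hZSnull]
    simp
  obtain ⟨i₀, hi₀⟩ := hS
  have hgval : ∫ v, g i₀ v ∂ν = 1 / r := by
    have hsum_int : ∫ v, ∑ i ∈ S, g i v ∂ν = 1 := by
      rw [show (fun v => ∑ i ∈ S, g i v) = fun v => ∑ i ∈ S, g i v from rfl]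
      calc ∫ v, ∑ i ∈ S, g i v ∂ν
          = ∫ v, Set.indicator ((ZS S)ᶜ) (fun _ => (1:ℝ)) v ∂ν := by
            congr 1; funext v; exact hsum v
        _ = 1 := hint_one
    rw [MeasureTheory.integral_finset_sum S (fun i hi => hg_int i hi)] at hsum_int
    have hall : ∀ i ∈ S, ∫ v, g i v ∂ν = ∫ v, g i₀ v ∂ν := fun i hi => hswap i hi i₀ hi₀
    rw [Finset.sum_congr rfl hall, Finset.sum_const, hcard] at hsum_int
    have hrne : (r:ℝ) ≠ 0 := by positivity
    rw [nsmul_eq_mul] at hsum_int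
    rw [eq_div_iff hrne]
    linarith [hsum_int]
  -- the lower bound function
  have hlow_int : Integrable (fun v => ∑ i ∈ S, lam i * g i v) ν :=
    MeasureTheory.integrable_finset_sum S fun i hi => (hg_int i hi).const_mul (lam i)
  -- main integrand
  set F : (Fin d → ℝ) → ℝ :=
    Set.indicator ((ZS S)ᶜ) (fun v => Mf v / Nf v) with hF
  have hNmeas : Measurable Nf := by
    rw [hNf]
    exact Finset.measurable_sum S fun i _ =>
      by fun_prop
  have hMmeas : Measurable Mf := by
    rw [hMf]
    exact Finset.measurable_sum S fun i _ =>
      by fun_prop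
  have hF_meas : Measurable F := by
    rw [hF]
    exact (hMmeas.div hNmeas).indicator (ZS_meas S).compl
  set B : ℝ := ∑ i, lam i with hB
  have hBnn : 0 ≤ B := Finset.sum_nonneg fun i _ => hlam i
  have hF_bdd : ∀ v, F v ∈ Set.Icc (0:ℝ) B := by
    intro v
    rw [hF]
    by_cases hv : v ∈ (ZS S)ᶜ
    · rw [Set.indicator_of_mem hv]
      have hN := hNpos v hv
      have hMB : Mf v ≤ B * Nf v := by
        rw [hMf, hNf, Finset.mul_sum]
        apply Finset.sum_le_sum
        intro i hi
        have hlB : lam i ≤ B := by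
          rw [hB]
          exact Finset.single_le_sum (fun k _ => hlam k) (Finset.mem_univ i)
        have : (lam i)^2 ≤ B * lam i := by nlinarith [hlam i]
        nlinarith [sq_nonneg (v i), this]
      have hMnn : 0 ≤ Mf v := Finset.sum_nonneg fun i _ =>
        mul_nonneg (sq_nonneg _) (sq_nonneg _)
      exact ⟨by positivity, by rw [div_le_iff₀ hN]; linarith [hMB]⟩
    · rw [Set.indicator_of_notMem hv]; exact ⟨le_refl 0, hBnn⟩
  have hF_int : Integrable F ν := by
    refine ⟨hF_meas.aestronglyMeasurable, ?_⟩
    apply MeasureTheory.HasFiniteIntegral.of_bounded (C := B)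
    filter_upwards with v
    obtain ⟨h0, h1⟩ := hF_bdd v
    rw [Real.norm_eq_abs, abs_of_nonneg h0]; exact h1
  -- pointwise inequality
  have hpt : ∀ v, ∑ i ∈ S, lam i * g i v ≤ F v := by
    intro v
    rw [hF]
    by_cases hv : v ∈ (ZS S)ᶜ
    · rw [Set.indicator_of_mem hv]
      have hP := hPpos v hv
      have hN := hNpos v hv
      have hLHS : ∑ i ∈ S, lam i * g i v = Nf v / Pf v := by
        rw [hNf, Finset.sum_div]
        apply Finset.sum_congr rfl
        intro i hi
        simp only [hg]
        simp only [Set.indicator_of_mem hv]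
        ring
      rw [hLHS, div_le_div_iff₀ hP hN]
      calc Nf v * Nf v = (Nf v)^2 := by ring
        _ ≤ Mf v * Pf v := hCS v
    · rw [Set.indicator_of_notMem hv]
      have : ∀ i ∈ S, lam i * g i v = 0 := by
        intro i hi
        simp only [hg]
        simp [Set.indicator_of_notMem hv]
      rw [Finset.sum_congr rfl this, Finset.sum_const_zero]
  -- put everything together
  have hmain : ∫ v, F v ∂ν ≥ (∑ i, lam i) / r := by
    have h1 : ∫ v, ∑ i ∈ S, lam i * g i v ∂ν ≤ ∫ v, F v ∂ν :=
      integral_mono hlow_int hF_int hpt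
    have h2 : ∫ v, ∑ i ∈ S, lam i * g i v ∂ν = (∑ i, lam i) / r := by
      rw [MeasureTheory.integral_finset_sum S fun i hi => (hg_int i hi).const_mul (lam i)]
      have : ∀ i ∈ S, ∫ v, lam i * g i v ∂ν = lam i * (1/r) := by
        intro i hi
        rw [MeasureTheory.integral_const_mul, hswap i hi i₀ hi₀, hgval]
      rw [Finset.sum_congr rfl this, ← Finset.sum_mul]
      have hSsum : ∑ i ∈ S, lam i = ∑ i, lam i := by
        apply Finset.sum_subset (Finset.subset_univ S)
        intro i _ hi
        exact hSlam0 i hi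
      rw [hSsum]
      ring
    linarith [h1, h2]
  -- identify F with the goal integrand
  have hgoal : ∫ v, Set.indicator {v : Fin d → ℝ | diagonal lam *ᵥ v ≠ 0}
      (fun v => (v ⬝ᵥ ((diagonal lam * diagonal lam) *ᵥ v)) / (v ⬝ᵥ (diagonal lam *ᵥ v))) v ∂ν
      = ∫ v, F v ∂ν := by
    congr 1
    funext v
    rw [keyset, hF]
    by_cases hv : v ∈ (ZS S)ᶜ
    · rw [Set.indicator_of_mem hv, Set.indicator_of_mem hv, key1, key2]
    · rw [Set.indicator_of_notMem hv, Set.indicator_of_notMem hv]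
  rw [hgoal]
  exact hmain

end Auxiliary

lemma quad_measurable {d : ℕ} (M : Matrix (Fin d) (Fin d) ℝ) :
    Measurable (fun v : Fin d → ℝ => v ⬝ᵥ (M *ᵥ v)) := by
  apply Finset.measurable_sum
  intro i _
  exact (measurable_pi_apply i).mul ((measurable_pi_apply i).comp (mulVec_measurable M))

lemma dot_conj {d : ℕ} (Q D : Matrix (Fin d) (Fin d) ℝ) (u : Fin d → ℝ) :
    u ⬝ᵥ ((Q * D * Qᵀ) *ᵥ u) = (Qᵀ *ᵥ u) ⬝ᵥ (D *ᵥ (Qᵀ *ᵥ u)) := by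
  rw [mul_assoc, ← mulVec_mulVec, Matrix.dotProduct_mulVec, ← Matrix.mulVec_transpose,
    mulVec_mulVec]

/-- For a rotation-invariant probability measure `ν` on `ℝ^d` with `ν {0} = 0`
and a PSD matrix `R` of rank `r ≥ 1`,
`∫ (uᵀR²u)/(uᵀRu) · 1_{Ru ≠ 0}(u) dν(u) ≥ tr(R)/r`. -/
theorem random_SR1_expected_progress
    {d : ℕ} (ν : Measure (Fin d → ℝ)) [IsProbabilityMeasure ν]
    (hν0 : ν {0} = 0)
    (hinv : ∀ Q : Matrix (Fin d) (Fin d) ℝ, Qᵀ * Q = 1 →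
      Measure.map (fun v => Q *ᵥ v) ν = ν)
    {R : Matrix (Fin d) (Fin d) ℝ} (hR : R.PosSemidef)
    {r : ℕ} (hrank : R.rank = r) (hr : 1 ≤ r) :
    R.trace / r ≤
      ∫ u, Set.indicator {u : Fin d → ℝ | R *ᵥ u ≠ 0}
        (fun u => (u ⬝ᵥ ((R * R) *ᵥ u)) / (u ⬝ᵥ (R *ᵥ u))) u ∂ν := by
  classical
  have hH : R.IsHermitian := hR.1
  set lam : Fin d → ℝ := hH.eigenvalues with hlamdef
  have hnn : ∀ i, 0 ≤ lam i := fun i => hR.eigenvalues_nonneg i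
  set Q : Matrix (Fin d) (Fin d) ℝ := (hH.eigenvectorUnitary : Matrix (Fin d) (Fin d) ℝ) with hQdef
  have hstar : star Q = Qᵀ := by simp [star, Matrix.conjTranspose]
  have hu1 : Q * Qᵀ = 1 := by
    rw [← hstar]; exact (Matrix.mem_unitaryGroup_iff).1 (hH.eigenvectorUnitary).2
  have hu2 : Qᵀ * Q = 1 := by
    rw [← hstar]; exact (Matrix.mem_unitaryGroup_iff').1 (hH.eigenvectorUnitary).2
  have hdiag : diagonal ((RCLike.ofReal : ℝ → ℝ) ∘ lam) = diagonal lam := by congr 1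
  have hspec : R = Q * diagonal lam * Qᵀ := by
    rw [← hstar, ← hdiag]; exact hH.spectral_theorem
  set D : Matrix (Fin d) (Fin d) ℝ := diagonal lam with hD
  have htrace : R.trace = ∑ i, lam i := by
    rw [hspec, Matrix.trace_mul_cycle, hu2, one_mul, Matrix.trace_diagonal]
  have hcard : (Finset.univ.filter (fun i => lam i ≠ 0)).card = r := by
    have h2 := hH.rank_eq_card_non_zero_eigs
    rw [hrank] at h2
    rw [← Fintype.card_subtype, ← h2]
  -- change of variables
  have hQt1 : (Qᵀ)ᵀ * Qᵀ = 1 := by rw [transpose_transpose, hu1]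
  have hmap := hinv Qᵀ hQt1
  set G : (Fin d → ℝ) → ℝ := Set.indicator {v : Fin d → ℝ | D *ᵥ v ≠ 0}
    (fun v => (v ⬝ᵥ ((D * D) *ᵥ v)) / (v ⬝ᵥ (D *ᵥ v))) with hG
  have hsetmeas : MeasurableSet {v : Fin d → ℝ | D *ᵥ v ≠ 0} := by
    have : {v : Fin d → ℝ | D *ᵥ v ≠ 0} = (fun v => D *ᵥ v) ⁻¹' ({0}ᶜ) := rfl
    rw [this]
    exact (mulVec_measurable D) (measurableSet_singleton 0).compl
  have hG_meas : Measurable G := by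
    rw [hG]
    exact ((quad_measurable (D*D)).div (quad_measurable D)).indicator hsetmeas
  -- pointwise identification
  have hpt : ∀ u, Set.indicator {u : Fin d → ℝ | R *ᵥ u ≠ 0}
      (fun u => (u ⬝ᵥ ((R * R) *ᵥ u)) / (u ⬝ᵥ (R *ᵥ u))) u = G (Qᵀ *ᵥ u) := by
    intro u
    have e1 : u ⬝ᵥ (R *ᵥ u) = (Qᵀ *ᵥ u) ⬝ᵥ (D *ᵥ (Qᵀ *ᵥ u)) := by
      rw [hspec]; exact dot_conj Q D u
    have hRR : R * R = Q * (D * D) * Qᵀ := by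
      rw [hspec]
      calc Q * D * Qᵀ * (Q * D * Qᵀ) = Q * D * (Qᵀ * Q) * D * Qᵀ := by
            simp only [mul_assoc]
        _ = Q * (D * D) * Qᵀ := by rw [hu2]; simp only [mul_one, mul_assoc]
    have e2 : u ⬝ᵥ ((R * R) *ᵥ u) = (Qᵀ *ᵥ u) ⬝ᵥ ((D * D) *ᵥ (Qᵀ *ᵥ u)) := by
      rw [hRR]; exact dot_conj Q (D*D) u
    have e3 : (R *ᵥ u ≠ 0) ↔ (D *ᵥ (Qᵀ *ᵥ u) ≠ 0) := by
      rw [hspec]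
      constructor
      · intro h hc
        apply h
        rw [mul_assoc, ← mulVec_mulVec, ← mulVec_mulVec, hc, mulVec_zero]
      · intro h hc
        apply h
        have : Qᵀ *ᵥ ((Q * D * Qᵀ) *ᵥ u) = 0 := by rw [hc, mulVec_zero]
        rw [mulVec_mulVec] at this
        calc D *ᵥ (Qᵀ *ᵥ u) = (D * Qᵀ) *ᵥ u := by rw [mulVec_mulVec]
          _ = (1 * (D * Qᵀ)) *ᵥ u := by rw [one_mul]
          _ = (Qᵀ * (Q * D * Qᵀ)) *ᵥ u := by
              rw [← hu2]; simp only [mul_assoc]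
          _ = 0 := this
    rw [hG]
    by_cases hu : R *ᵥ u ≠ 0
    · rw [Set.indicator_of_mem (show u ∈ {u : Fin d → ℝ | R *ᵥ u ≠ 0} from hu),
        Set.indicator_of_mem (show Qᵀ *ᵥ u ∈ {v : Fin d → ℝ | D *ᵥ v ≠ 0} from e3.1 hu), e1, e2]
    · rw [Set.indicator_of_notMem (show u ∉ {u : Fin d → ℝ | R *ᵥ u ≠ 0} from hu),
        Set.indicator_of_notMem
          (show Qᵀ *ᵥ u ∉ {v : Fin d → ℝ | D *ᵥ v ≠ 0} from fun h => hu (e3.2 h))]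
  rw [htrace,
    show (fun u => Set.indicator {u : Fin d → ℝ | R *ᵥ u ≠ 0}
      (fun u => (u ⬝ᵥ ((R * R) *ᵥ u)) / (u ⬝ᵥ (R *ᵥ u))) u) = (fun u => G (Qᵀ *ᵥ u))
      from funext hpt]
  have hfin : ∫ u, G (Qᵀ *ᵥ u) ∂ν = ∫ v, G v ∂ν := by
    conv_rhs => rw [← hmap]
    exact (integral_map (mulVec_measurable _).aemeasurable hG_meas.aestronglyMeasurable).symm
  rw [hfin, hG]
  exact diag_case ν hν0 hinv lam hnn hr hcard
end

section
/- Let A, G be positive definite symmetric d×d real matrices with A ⪯ G, let L be an invertible d×d matrix with Lᵀ L = G⁻¹, and let ν be an admissible direction distribution on ℝ^d. Then ∫ σ_A(BFGS(G, A, Lᵀ ũ)) dν(ũ) = (1 − 1/d) · σ_A(G). -/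
open Matrix MeasureTheory

/-- The BFGS quasi-Newton update. -/
noncomputable def BFGS {d : ℕ} (G A : Matrix (Fin d) (Fin d) ℝ) (u : Fin d → ℝ) :
    Matrix (Fin d) (Fin d) ℝ :=
  if u = 0 then G
  else G - (u ⬝ᵥ (G *ᵥ u))⁻¹ • vecMulVec (G *ᵥ u) (u ᵥ* G)
         + (u ⬝ᵥ (A *ᵥ u))⁻¹ • vecMulVec (A *ᵥ u) (u ᵥ* A)

/-- An admissible direction distribution: a probability measure on `ℝ^d` giving no mass to `0`
and with `∫ u uᵀ/(uᵀu) dν = (1/d) I` (entrywise). -/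
def IsAdmissible {d : ℕ} (ν : Measure (Fin d → ℝ)) : Prop :=
  IsProbabilityMeasure ν ∧ ν {0} = 0 ∧
    ∀ i j : Fin d, (∫ u, u i * u j / (u ⬝ᵥ u) ∂ν) = if i = j then (d : ℝ)⁻¹ else 0

lemma trace_vmv {d : ℕ} (x y : Fin d → ℝ) (B : Matrix (Fin d) (Fin d) ℝ) :
    (vecMulVec x y * B).trace = x ⬝ᵥ (y ᵥ* B) := by
  simp [Matrix.trace, Matrix.diag, Matrix.mul_apply, Matrix.vecMulVec_apply, dotProduct,
    Matrix.vecMul, Finset.mul_sum, mul_assoc]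

lemma sigma_bfgs {d : ℕ} {A : Matrix (Fin d) (Fin d) ℝ} (G : Matrix (Fin d) (Fin d) ℝ)
    (hA : A.PosDef) {u : Fin d → ℝ} (hu : u ≠ 0) :
    sigmaA A (BFGS G A u) =
      sigmaA A G + 1 - (u ⬝ᵥ ((G * A⁻¹ * G) *ᵥ u)) / (u ⬝ᵥ (G *ᵥ u)) := by
  have hAu : A * A⁻¹ = 1 := mul_nonsing_inv A ((isUnit_iff_isUnit_det _).1 hA.isUnit)
  have huAu : (0:ℝ) < u ⬝ᵥ (A *ᵥ u) := by simpa using hA.dotProduct_mulVec_pos hu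
  have h1 : (vecMulVec (G *ᵥ u) (u ᵥ* G) * A⁻¹).trace = u ⬝ᵥ ((G * A⁻¹ * G) *ᵥ u) := by
    rw [trace_vmv, Matrix.vecMul_vecMul, dotProduct_comm, ← Matrix.dotProduct_mulVec,
      Matrix.mulVec_mulVec]
  have h2 : (vecMulVec (A *ᵥ u) (u ᵥ* A) * A⁻¹).trace = u ⬝ᵥ (A *ᵥ u) := by
    rw [trace_vmv, Matrix.vecMul_vecMul, hAu, Matrix.vecMul_one, dotProduct_comm]
  rw [BFGS, if_neg hu, sigmaA, sigmaA]
  rw [show G - (u ⬝ᵥ (G *ᵥ u))⁻¹ • vecMulVec (G *ᵥ u) (u ᵥ* G)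
         + (u ⬝ᵥ (A *ᵥ u))⁻¹ • vecMulVec (A *ᵥ u) (u ᵥ* A) - A
      = (G - A) - (u ⬝ᵥ (G *ᵥ u))⁻¹ • vecMulVec (G *ᵥ u) (u ᵥ* G)
         + (u ⬝ᵥ (A *ᵥ u))⁻¹ • vecMulVec (A *ᵥ u) (u ᵥ* A) by
      rw [add_sub_right_comm, sub_right_comm]]
  rw [Matrix.add_mul, Matrix.sub_mul, Matrix.smul_mul, Matrix.smul_mul, trace_add, trace_sub,
    trace_smul, trace_smul, h1, h2, smul_eq_mul, smul_eq_mul, inv_mul_cancel₀ huAu.ne']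
  rw [inv_mul_eq_div]
  ring

lemma quad_transpose {d : ℕ} (L N : Matrix (Fin d) (Fin d) ℝ) (v : Fin d → ℝ) :
    (Lᵀ *ᵥ v) ⬝ᵥ (N *ᵥ (Lᵀ *ᵥ v)) = v ⬝ᵥ ((L * N * Lᵀ) *ᵥ v) := by
  rw [Matrix.mulVec_mulVec, Matrix.mulVec_transpose, ← Matrix.dotProduct_mulVec,
    Matrix.mulVec_mulVec, ← Matrix.mul_assoc]

/-- One random scaled BFGS step:
`∫ σ_A(BFGS(G, A, Lᵀ ũ)) dν(ũ) = (1 - 1/d) σ_A(G)`. -/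
theorem random_BFGS_expected_progress
    {d : ℕ} {A G : Matrix (Fin d) (Fin d) ℝ}
    (hA : A.PosDef) (hG : G.PosDef) (hAsymm : A.IsSymm) (hGsymm : G.IsSymm)
    (hAG : (G - A).PosSemidef)
    {L : Matrix (Fin d) (Fin d) ℝ} (hL : IsUnit L) (hLG : Lᵀ * L = G⁻¹)
    (ν : Measure (Fin d → ℝ)) (hν : IsAdmissible ν) :
    (∫ v, sigmaA A (BFGS G A (Lᵀ *ᵥ v)) ∂ν) = (1 - 1 / (d : ℝ)) * sigmaA A G := by
  obtain ⟨hprob, hzero, hmom⟩ := hν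
  have hd : d ≠ 0 := by
    rintro rfl
    have huniv : ({0} : Set (Fin 0 → ℝ)) = Set.univ :=
      Set.eq_univ_of_forall fun x => by simp [Subsingleton.elim x 0]
    rw [huniv, measure_univ] at hzero
    exact one_ne_zero hzero
  have hdR : (d : ℝ) ≠ 0 := Nat.cast_ne_zero.2 hd
  have hGdet : IsUnit G.det := (isUnit_iff_isUnit_det _).1 hG.isUnit
  have hAdet : IsUnit A.det := (isUnit_iff_isUnit_det _).1 hA.isUnit
  have hLTdet : IsUnit Lᵀ.det := by
    rw [Matrix.det_transpose]; exact (isUnit_iff_isUnit_det _).1 hL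
  -- L G Lᵀ = 1
  have hGLL : G * Lᵀ * L = 1 := by
    rw [Matrix.mul_assoc, hLG, mul_nonsing_inv _ hGdet]
  have hLGL : L * G * Lᵀ = 1 := by
    rw [Matrix.mul_assoc]
    exact mul_eq_one_comm.1 hGLL
  set M : Matrix (Fin d) (Fin d) ℝ := L * (G * A⁻¹ * G) * Lᵀ with hM
  -- trace of M
  have htrM : M.trace = sigmaA A G + d := by
    rw [hM, trace_mul_cycle, hLG]
    have h1 : G⁻¹ * (G * A⁻¹ * G) = A⁻¹ * G := by
      rw [Matrix.mul_assoc G, ← Matrix.mul_assoc G⁻¹, nonsing_inv_mul _ hGdet, Matrix.one_mul]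
    rw [h1, sigmaA, Matrix.sub_mul, trace_sub, mul_nonsing_inv _ hAdet, trace_one,
      trace_mul_comm]
    simp
  -- pointwise identity off zero
  have key : ∀ v : Fin d → ℝ, v ≠ 0 →
      sigmaA A (BFGS G A (Lᵀ *ᵥ v)) =
        sigmaA A G + 1 - (v ⬝ᵥ (M *ᵥ v)) / (v ⬝ᵥ v) := by
    intro v hv
    have hu : Lᵀ *ᵥ v ≠ 0 := by
      intro h
      apply hv
      have := congrArg (fun w => (Lᵀ)⁻¹ *ᵥ w) h
      simpa [Matrix.mulVec_mulVec, nonsing_inv_mul _ hLTdet] using this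
    rw [sigma_bfgs G hA hu, quad_transpose, quad_transpose, hLGL, Matrix.one_mulVec, hM]
  -- measurability
  have hmeas : ∀ i j : Fin d, Measurable fun v : Fin d → ℝ => v i * v j / (v ⬝ᵥ v) := by
    intro i j
    have hdot : Measurable fun v : Fin d → ℝ => v ⬝ᵥ v := by
      simp only [dotProduct]
      exact Finset.measurable_sum _ fun k _ => (measurable_pi_apply k).mul (measurable_pi_apply k)
    exact ((measurable_pi_apply i).mul (measurable_pi_apply j)).div hdot
  -- diagonal integrability
  have hdiag : ∀ i : Fin d, Integrable (fun v => v i * v i / (v ⬝ᵥ v)) ν := by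
    intro i
    by_contra h
    have h2 := hmom i i
    rw [integral_undef h, if_pos rfl] at h2
    exact hdR (inv_eq_zero.mp h2.symm)
  have hnn : ∀ v : Fin d → ℝ, 0 ≤ v ⬝ᵥ v :=
    fun v => Finset.sum_nonneg fun k _ => mul_self_nonneg _
  -- all integrability
  have hint : ∀ i j : Fin d, Integrable (fun v => v i * v j / (v ⬝ᵥ v)) ν := by
    intro i j
    refine Integrable.mono' (((hdiag i).add (hdiag j)).const_mul (1/2))
      ((hmeas i j).aestronglyMeasurable) ?_
    filter_upwards with v
    simp only [Pi.add_apply]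
    have hc := hnn v
    rw [Real.norm_eq_abs, abs_div, abs_of_nonneg hc]
    have h1 : |v i * v j| ≤ (v i * v i + v j * v j) / 2 := by
      rw [abs_le]
      constructor
      · nlinarith [sq_nonneg (v i + v j)]
      · nlinarith [sq_nonneg (v i - v j)]
    rcases hc.eq_or_lt with h | h
    · simp [← h]
    · have h2 : (1:ℝ)/2 * (v i * v i / (v ⬝ᵥ v) + v j * v j / (v ⬝ᵥ v))
          = ((v i * v i + v j * v j) / 2) / (v ⬝ᵥ v) := by ring
      rw [h2]
      gcongr
  have hintS : Integrable (fun v => ∑ i, ∑ j, M i j * (v i * v j / (v ⬝ᵥ v))) ν :=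
    integrable_finset_sum _ fun i _ =>
      integrable_finset_sum _ fun j _ => (hint i j).const_mul _
  -- a.e. identity
  have hae : (fun v => sigmaA A (BFGS G A (Lᵀ *ᵥ v))) =ᵐ[ν]
      fun v => sigmaA A G + 1 - ∑ i, ∑ j, M i j * (v i * v j / (v ⬝ᵥ v)) := by
    have h0 : ∀ᵐ v ∂ν, v ≠ 0 := by
      rw [ae_iff]
      simpa using hzero
    filter_upwards [h0] with v hv
    rw [key v hv]
    congr 1
    simp only [dotProduct, Matrix.mulVec]
    rw [Finset.sum_div]
    refine Finset.sum_congr rfl fun i _ => ?_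
    rw [Finset.mul_sum, Finset.sum_div]
    refine Finset.sum_congr rfl fun j _ => ?_
    ring
  rw [integral_congr_ae hae, integral_sub (integrable_const _) hintS, integral_const]
  have hS : (∫ v, ∑ i, ∑ j, M i j * (v i * v j / (v ⬝ᵥ v)) ∂ν) = M.trace / d := by
    rw [integral_finset_sum _ fun i _ =>
      integrable_finset_sum _ fun j _ => (hint i j).const_mul (M i j)]
    have : ∀ i : Fin d, (∫ v, ∑ j, M i j * (v i * v j / (v ⬝ᵥ v)) ∂ν) = M i i * (d : ℝ)⁻¹ := by
      intro i
      rw [integral_finset_sum _ fun j _ => (hint i j).const_mul (M i j)]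
      have : ∀ j : Fin d, (∫ v, M i j * (v i * v j / (v ⬝ᵥ v)) ∂ν)
          = M i j * (if i = j then (d:ℝ)⁻¹ else 0) := by
        intro j
        rw [integral_const_mul, hmom i j]
      simp only [this]
      simp [mul_ite]
    simp only [this]
    rw [Matrix.trace, div_eq_mul_inv, ← Finset.sum_mul]
    rfl
  rw [hS, htrM, probReal_univ]
  simp only [ENNReal.toReal_one, one_smul]
  field_simp
  ring
end

section
/- Let A, G be positive definite symmetric d×d real matrices, let L be an invertible d×d matrix with Lᵀ L = G⁻¹, let ũ ∈ ℝ^d with ũ ≠ 0, and set u := Lᵀ ũ, v := (sqrt(uᵀ A u)/‖ũ‖) · ũ, and L' := L − ((L A u − v) uᵀ)/(uᵀ A u). Then BFGS(G, A, u) is invertible and L'ᵀ L' = (BFGS(G, A, u))⁻¹. -/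
open Matrix
variable {d : ℕ}

lemma vmv_mul (x y : Fin d → ℝ) (M : Matrix (Fin d) (Fin d) ℝ) :
    vecMulVec x y * M = vecMulVec x (y ᵥ* M) := by
  ext i j
  simp [mul_apply, vecMulVec_apply, vecMul, dotProduct, Finset.mul_sum, mul_assoc]

lemma mul_vmv (M : Matrix (Fin d) (Fin d) ℝ) (x y : Fin d → ℝ) :
    M * vecMulVec x y = vecMulVec (M *ᵥ x) y := by
  ext i j
  simp only [mul_apply, vecMulVec_apply, mulVec, dotProduct, Finset.mul_sum, Finset.sum_mul]
  congr 1; ext k; ring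

lemma vmv_vmv (x y p q : Fin d → ℝ) :
    vecMulVec x y * vecMulVec p q = (y ⬝ᵥ p) • vecMulVec x q := by
  ext i j
  simp only [mul_apply, vecMulVec_apply, dotProduct, Matrix.smul_apply, smul_eq_mul, Finset.sum_mul]
  congr 1; ext k; ring

lemma vmv_t (x y : Fin d → ℝ) : (vecMulVec x y)ᵀ = vecMulVec y x := by
  ext i j; simp [vecMulVec_apply, mul_comm]

lemma vmv_subl (x y z : Fin d → ℝ) : vecMulVec (x - y) z = vecMulVec x z - vecMulVec y z := by
  ext i j; simp [vecMulVec_apply, sub_mul]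

lemma vmv_subr (x y z : Fin d → ℝ) : vecMulVec x (y - z) = vecMulVec x y - vecMulVec x z := by
  ext i j; simp [vecMulVec_apply, mul_sub]

lemma vmv_smull (c : ℝ) (x z : Fin d → ℝ) : vecMulVec (c • x) z = c • vecMulVec x z := by
  ext i j; simp [vecMulVec_apply, mul_assoc]

lemma vmv_smulr (c : ℝ) (x z : Fin d → ℝ) : vecMulVec x (c • z) = c • vecMulVec x z := by
  ext i j; simp [vecMulVec_apply]; ring

lemma vmv_mulVec (x y z : Fin d → ℝ) : vecMulVec x y *ᵥ z = (y ⬝ᵥ z) • x := by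
  ext i
  simp only [mulVec, vecMulVec_apply, dotProduct, Pi.smul_apply, smul_eq_mul, Finset.sum_mul]
  congr 1; ext k; ring

/-- Cholesky-type factor update for the inverse BFGS matrix:
with `u = Lᵀũ`, `v = (√(uᵀAu)/‖ũ‖) ũ`, and `L' = L − (LAu − v)uᵀ/(uᵀAu)`,
the update `BFGS(G,A,u)` is invertible and `L'ᵀL' = (BFGS(G,A,u))⁻¹`. -/
theorem BFGS_factor_update
    {d : ℕ} {A G : Matrix (Fin d) (Fin d) ℝ} (hA : A.PosDef) (hG : G.PosDef)
    {L : Matrix (Fin d) (Fin d) ℝ} (hL : IsUnit L) (hLG : Lᵀ * L = G⁻¹)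
    {w : Fin d → ℝ} (hw : w ≠ 0) :
    let u := Lᵀ *ᵥ w
    let v := (Real.sqrt (u ⬝ᵥ (A *ᵥ u)) / Real.sqrt (w ⬝ᵥ w)) • w
    let L' := L - (u ⬝ᵥ (A *ᵥ u))⁻¹ • vecMulVec ((L * A) *ᵥ u - v) u
    IsUnit (BFGS G A u) ∧ L'ᵀ * L' = (BFGS G A u)⁻¹ := by
  intro u v L'
  have hAt : Aᵀ = A := hA.1
  have hGunit : IsUnit G.det := (Matrix.isUnit_iff_isUnit_det G).mp hG.isUnit
  have hGH : G * (Lᵀ * L) = 1 := by rw [hLG]; exact Matrix.mul_nonsing_inv G hGunit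
  have hHG : (Lᵀ * L) * G = 1 := mul_eq_one_comm.mp hGH
  have hLGL : (L * G) * Lᵀ = 1 := by
    rw [mul_eq_one_comm]
    calc Lᵀ * (L * G) = (Lᵀ * L) * G := by rw [Matrix.mul_assoc]
    _ = 1 := hHG
  have hu : u ≠ 0 := by
    intro h
    apply hw
    have : ((L * G) * Lᵀ) *ᵥ w = w := by rw [hLGL, Matrix.one_mulVec]
    rw [← Matrix.mulVec_mulVec] at this
    rw [show Lᵀ *ᵥ w = u from rfl, h, Matrix.mulVec_zero] at this
    exact this.symm
  have ha : 0 < u ⬝ᵥ (A *ᵥ u) := by simpa using hA.dotProduct_mulVec_pos hu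
  have hg : 0 < u ⬝ᵥ (G *ᵥ u) := by simpa using hG.dotProduct_mulVec_pos hu
  have hww : 0 < w ⬝ᵥ w := by
    have h0 : ∀ i, 0 ≤ w i * w i := fun i => mul_self_nonneg _
    rcases Function.ne_iff.mp hw with ⟨i, hi⟩
    exact Finset.sum_pos' (fun i _ => h0 i) ⟨i, Finset.mem_univ i, mul_self_pos.mpr hi⟩
  set c : ℝ := Real.sqrt (u ⬝ᵥ (A *ᵥ u)) / Real.sqrt (w ⬝ᵥ w) with hc
  have hvv : v ⬝ᵥ v = u ⬝ᵥ (A *ᵥ u) := by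
    show (c • w) ⬝ᵥ (c • w) = _
    rw [smul_dotProduct, dotProduct_smul, hc, smul_eq_mul, smul_eq_mul, ← mul_assoc,
      div_mul_div_comm, Real.mul_self_sqrt ha.le, Real.mul_self_sqrt hww.le]
    exact div_mul_cancel₀ _ hww.ne'
  have hLtv : Lᵀ *ᵥ v = c • u := by
    show Lᵀ *ᵥ (c • w) = c • u
    rw [Matrix.mulVec_smul]
  have hvL : v ᵥ* L = c • u := by rw [← Matrix.mulVec_transpose L v]; exact hLtv
  have hLtp : Lᵀ *ᵥ ((L * A) *ᵥ u) = ((Lᵀ * L) * A) *ᵥ u := by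
    rw [Matrix.mulVec_mulVec, Matrix.mul_assoc]
  have hpL : ((L * A) *ᵥ u) ᵥ* L = u ᵥ* (A * (Lᵀ * L)) := by
    rw [Matrix.vecMul_mulVec, Matrix.transpose_mul, hAt, Matrix.mul_assoc]
  have hpv : ((L * A) *ᵥ u) ⬝ᵥ v = c * (u ⬝ᵥ (A *ᵥ u)) := by
    rw [dotProduct_comm]
    show (c • w) ⬝ᵥ _ = _
    rw [smul_dotProduct, smul_eq_mul]
    congr 1
    rw [Matrix.dotProduct_mulVec, ← Matrix.vecMul_vecMul, ← Matrix.mulVec_transpose L w]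
    exact (Matrix.dotProduct_mulVec u A u).symm
  have hpp : ((L * A) *ᵥ u) ⬝ᵥ ((L * A) *ᵥ u) = u ⬝ᵥ ((A * (Lᵀ * L) * A) *ᵥ u) := by
    rw [Matrix.dotProduct_mulVec, ← Matrix.vecMul_vecMul, hpL, Matrix.vecMul_vecMul,
      ← Matrix.dotProduct_mulVec]
  have hqq : (u ᵥ* A) ⬝ᵥ (((Lᵀ * L) * A) *ᵥ u) = u ⬝ᵥ ((A * (Lᵀ * L) * A) *ᵥ u) := by
    rw [Matrix.dotProduct_mulVec, Matrix.vecMul_vecMul, ← Matrix.dotProduct_mulVec,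
      ← Matrix.mul_assoc]
  have hGa : (u ᵥ* G) ⬝ᵥ (((Lᵀ * L) * A) *ᵥ u) = u ⬝ᵥ (A *ᵥ u) := by
    rw [Matrix.dotProduct_mulVec, Matrix.vecMul_vecMul, ← Matrix.mul_assoc, hGH,
      Matrix.one_mul, ← Matrix.dotProduct_mulVec]
  have hGu : (u ᵥ* G) ⬝ᵥ u = u ⬝ᵥ (G *ᵥ u) := (Matrix.dotProduct_mulVec u G u).symm
  have hAu : (u ᵥ* A) ⬝ᵥ u = u ⬝ᵥ (A *ᵥ u) := (Matrix.dotProduct_mulVec u A u).symm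
  have hGHA : G * ((Lᵀ * L) * A) = A := by rw [← Matrix.mul_assoc, hGH, Matrix.one_mul]
  have hAHG : (A * (Lᵀ * L)) * G = A := by rw [Matrix.mul_assoc, hHG, Matrix.mul_one]
  have hqq2 : (u ᵥ* (A * (Lᵀ * L * A))) ⬝ᵥ u = u ⬝ᵥ ((A * (Lᵀ * L) * A) *ᵥ u) := by
    rw [← Matrix.dotProduct_mulVec, ← Matrix.mul_assoc]
  -- the explicit inverse matrix
  set E : Matrix (Fin d) (Fin d) ℝ :=
    Lᵀ * L - (u ⬝ᵥ (A *ᵥ u))⁻¹ • vecMulVec (((Lᵀ * L) * A) *ᵥ u) u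
      - (u ⬝ᵥ (A *ᵥ u))⁻¹ • vecMulVec u (u ᵥ* (A * (Lᵀ * L)))
      + ((u ⬝ᵥ (A *ᵥ u))⁻¹ * (u ⬝ᵥ (A *ᵥ u))⁻¹ * (u ⬝ᵥ ((A * (Lᵀ * L) * A) *ᵥ u))
          + (u ⬝ᵥ (A *ᵥ u))⁻¹) • vecMulVec u u with hE
  have hstepA : L'ᵀ * L' = E := by
    show (L - (u ⬝ᵥ (A *ᵥ u))⁻¹ • vecMulVec ((L * A) *ᵥ u - v) u)ᵀ
        * (L - (u ⬝ᵥ (A *ᵥ u))⁻¹ • vecMulVec ((L * A) *ᵥ u - v) u) = E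
    rw [Matrix.transpose_sub, Matrix.transpose_smul, vmv_t]
    rw [Matrix.sub_mul, Matrix.mul_sub, Matrix.mul_sub]
    rw [Matrix.mul_smul, Matrix.smul_mul, Matrix.smul_mul, Matrix.mul_smul, smul_smul]
    rw [mul_vmv, vmv_mul, vmv_vmv]
    rw [Matrix.mulVec_sub, hLtp, hLtv, Matrix.sub_vecMul, hpL, hvL]
    rw [sub_dotProduct, dotProduct_sub, dotProduct_sub, hpp, hpv, hvv,
      dotProduct_comm v ((L * A) *ᵥ u), hpv]
    rw [vmv_subl, vmv_subr, vmv_smull, vmv_smulr, hE]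
    match_scalars
    all_goals (field_simp [ha.ne', hg.ne']; try ring)
  have hstepB : BFGS G A u * E = 1 := by
    rw [BFGS, if_neg hu, hE]
    simp only [Matrix.add_mul, Matrix.sub_mul, Matrix.mul_add, Matrix.mul_sub,
      Matrix.smul_mul, Matrix.mul_smul, mul_vmv, vmv_mul, vmv_vmv, smul_smul,
      vmv_mulVec, vmv_smull, vmv_smulr, Matrix.mulVec_mulVec, Matrix.vecMul_vecMul,
      hGH, hGHA, hAHG, Matrix.vecMul_one, hGa, hGu, hqq, hqq2, hAu]
    match_scalars
    all_goals (field_simp [ha.ne', hg.ne']; try ring)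
  have hBE : BFGS G A u * (L'ᵀ * L') = 1 := by rw [hstepA]; exact hstepB
  refine ⟨(Matrix.isUnit_iff_isUnit_det _).mpr (Matrix.isUnit_det_of_right_inverse hBE), ?_⟩
  exact (Matrix.inv_eq_right_inv hBE).symm
end

section
/- Let 0 < m ≤ L be reals, A a real symmetric d×d matrix with m·I_d ⪯ A ⪯ L·I_d, b ∈ ℝ^d, x_0 ∈ ℝ^d, and G_0 ⪰ A symmetric. Define recursively: x_{k+1} := x_k − G_k⁻¹(A x_k − b); u_k = e_{i_k} a standard basis vector with (G_k − A)_{i_k,i_k} ≥ (G_k − A)_{j,j} for every j; and G_{k+1} := SR1(G_k, A, u_k). Then for every 0 ≤ k ≤ d: λ_f(x_{k+1}) ≤ (1 − k/d) · (τ_A(G_0)/m) · λ_f(x_k). -/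
open Matrix

namespace SR1Proof

variable {d : ℕ}

lemma psd_nonneg {M : Matrix (Fin d) (Fin d) ℝ} (hM : M.PosSemidef) (x : Fin d → ℝ) :
    0 ≤ x ⬝ᵥ M *ᵥ x := by simpa using hM.dotProduct_mulVec_nonneg x

lemma isSymm_isHermitian {M : Matrix (Fin d) (Fin d) ℝ} (hM : M.IsSymm) : M.IsHermitian := by
  rwa [Matrix.IsHermitian, Matrix.conjTranspose_eq_transpose_of_trivial]

lemma dot_symm {M : Matrix (Fin d) (Fin d) ℝ} (hM : M.IsSymm) (u v : Fin d → ℝ) :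
    u ⬝ᵥ M *ᵥ v = v ⬝ᵥ M *ᵥ u := by
  calc u ⬝ᵥ M *ᵥ v = (Mᵀ *ᵥ u) ⬝ᵥ v := by
        rw [Matrix.dotProduct_mulVec, ← Matrix.mulVec_transpose]
    _ = (M *ᵥ u) ⬝ᵥ v := by rw [hM.eq]
    _ = v ⬝ᵥ M *ᵥ u := dotProduct_comm _ _

lemma dot_transpose_mul (B : Matrix (Fin d) (Fin d) ℝ) (u v : Fin d → ℝ) :
    u ⬝ᵥ (Bᵀ * B) *ᵥ v = (B *ᵥ u) ⬝ᵥ (B *ᵥ v) := by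
  rw [← Matrix.mulVec_mulVec, Matrix.dotProduct_mulVec, Matrix.vecMul_transpose]

lemma psd_decomp {M : Matrix (Fin d) (Fin d) ℝ} (hM : M.PosSemidef) :
    ∃ B : Matrix (Fin d) (Fin d) ℝ, M = Bᵀ * B := by
  obtain ⟨B, hB⟩ : ∃ B : Matrix (Fin d) (Fin d) ℝ, M = star B * B :=
    by open scoped MatrixOrder in exact CStarAlgebra.nonneg_iff_eq_star_mul_self.mp hM.nonneg
  exact ⟨B, by rwa [Matrix.star_eq_conjTranspose, Matrix.conjTranspose_eq_transpose_of_trivial] at hB⟩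

lemma psd_cauchy {M : Matrix (Fin d) (Fin d) ℝ} (hM : M.PosSemidef) (u v : Fin d → ℝ) :
    (u ⬝ᵥ M *ᵥ v) ^ 2 ≤ (u ⬝ᵥ M *ᵥ u) * (v ⬝ᵥ M *ᵥ v) := by
  obtain ⟨B, rfl⟩ := psd_decomp hM
  rw [dot_transpose_mul, dot_transpose_mul, dot_transpose_mul]
  have h := Finset.sum_mul_sq_le_sq_mul_sq Finset.univ (B *ᵥ u) (B *ᵥ v)
  simpa [dotProduct, sq] using h

lemma psd_quadform_le_trace {M : Matrix (Fin d) (Fin d) ℝ} (hM : M.PosSemidef) (x : Fin d → ℝ) :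
    x ⬝ᵥ M *ᵥ x ≤ M.trace * (x ⬝ᵥ x) := by
  obtain ⟨B, rfl⟩ := psd_decomp hM
  rw [dot_transpose_mul]
  have key : ∀ i : Fin d, (B *ᵥ x) i * (B *ᵥ x) i ≤ (∑ j, B i j * B i j) * (x ⬝ᵥ x) := by
    intro i
    have h := Finset.sum_mul_sq_le_sq_mul_sq Finset.univ (fun j => B i j) x
    simpa [Matrix.mulVec, dotProduct, sq] using h
  calc (B *ᵥ x) ⬝ᵥ (B *ᵥ x) = ∑ i, (B *ᵥ x) i * (B *ᵥ x) i := rfl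
    _ ≤ ∑ i : Fin d, (∑ j, B i j * B i j) * (x ⬝ᵥ x) :=
        Finset.sum_le_sum fun i _ => key i
    _ = (∑ i : Fin d, ∑ j, B i j * B i j) * (x ⬝ᵥ x) := by rw [Finset.sum_mul]
    _ = (Bᵀ * B).trace * (x ⬝ᵥ x) := by
        congr 1
        rw [Matrix.trace]
        simp only [Matrix.diag_apply, Matrix.mul_apply, Matrix.transpose_apply]
        exact Finset.sum_comm

lemma psd_diag_nonneg {M : Matrix (Fin d) (Fin d) ℝ} (hM : M.PosSemidef) (j : Fin d) :
    0 ≤ M j j := by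
  have h := psd_nonneg hM (Pi.single j 1)
  simpa using h

lemma psd_trace_nonneg {M : Matrix (Fin d) (Fin d) ℝ} (hM : M.PosSemidef) :
    0 ≤ M.trace :=
  Finset.sum_nonneg fun j _ => psd_diag_nonneg hM j

lemma psd_entry_sq {M : Matrix (Fin d) (Fin d) ℝ} (hM : M.PosSemidef) (j l : Fin d) :
    (M j l) ^ 2 ≤ M j j * M l l := by
  have h := psd_cauchy hM (Pi.single j 1) (Pi.single l 1)
  simpa using h

lemma psd_col_zero {M : Matrix (Fin d) (Fin d) ℝ} (hM : M.PosSemidef) {j : Fin d}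
    (hj : M j j = 0) : M *ᵥ Pi.single j 1 = 0 := by
  funext l
  have h := psd_entry_sq hM l j
  rw [hj, mul_zero] at h
  have : M l j = 0 := by nlinarith [sq_nonneg (M l j)]
  simp [this]

lemma inv_quadform_ge {A : Matrix (Fin d) (Fin d) ℝ} (hA : A.PosDef) (hAs : A.IsSymm)
    (z y : Fin d → ℝ) : 2 * (z ⬝ᵥ y) - y ⬝ᵥ A *ᵥ y ≤ z ⬝ᵥ A⁻¹ *ᵥ z := by
  have hdet : IsUnit A.det := hA.det_pos.ne'.isUnit
  set w : Fin d → ℝ := A⁻¹ *ᵥ z - y with hw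
  have hAw : A *ᵥ w = z - A *ᵥ y := by
    rw [hw, Matrix.mulVec_sub, Matrix.mulVec_mulVec, Matrix.mul_nonsing_inv _ hdet,
      Matrix.one_mulVec]
  have h0 : 0 ≤ w ⬝ᵥ A *ᵥ w := psd_nonneg hA.posSemidef w
  have hexp : w ⬝ᵥ A *ᵥ w =
      z ⬝ᵥ A⁻¹ *ᵥ z - 2 * (z ⬝ᵥ y) + y ⬝ᵥ A *ᵥ y := by
    rw [hAw, hw]
    rw [sub_dotProduct, dotProduct_sub, dotProduct_sub]
    have h1 : (A⁻¹ *ᵥ z) ⬝ᵥ z = z ⬝ᵥ A⁻¹ *ᵥ z := dotProduct_comm _ _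
    have h2 : (A⁻¹ *ᵥ z) ⬝ᵥ (A *ᵥ y) = y ⬝ᵥ z := by
      rw [dot_symm hAs (A⁻¹ *ᵥ z) y, Matrix.mulVec_mulVec, Matrix.mul_nonsing_inv _ hdet,
        Matrix.one_mulVec]
    have h3 : z ⬝ᵥ y = y ⬝ᵥ z := dotProduct_comm _ _
    rw [h1, h2, h3]
    ring
  linarith

lemma step_bound {A G : Matrix (Fin d) (Fin d) ℝ} (hA : A.PosDef) (hAs : A.IsSymm)
    (hGs : G.IsSymm) (hGA : (G - A).PosSemidef) {η : ℝ} (hη : 0 ≤ η)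
    (hMη : ∀ y : Fin d → ℝ, y ⬝ᵥ (G - A) *ᵥ y ≤ η * (y ⬝ᵥ A *ᵥ y)) (b xk : Fin d → ℝ) :
    lambdaF A b (xk - G⁻¹ *ᵥ (A *ᵥ xk - b)) ≤ η * lambdaF A b xk := by
  have hAdet : IsUnit A.det := hA.det_pos.ne'.isUnit
  have hG : G.PosDef := by
    have := hA.add_posSemidef hGA
    simpa using this
  have hGdet : IsUnit G.det := hG.det_pos.ne'.isUnit
  have hMs : (G - A).IsSymm := hGs.sub hAs
  set r : Fin d → ℝ := A *ᵥ xk - b with hr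
  set w : Fin d → ℝ := G⁻¹ *ᵥ r with hwdef
  have hGw : G *ᵥ w = r := by
    rw [hwdef, Matrix.mulVec_mulVec, Matrix.mul_nonsing_inv _ hGdet, Matrix.one_mulVec]
  set z : Fin d → ℝ := (G - A) *ᵥ w with hz
  have hr' : A *ᵥ (xk - w) - b = z := by
    rw [Matrix.mulVec_sub, sub_right_comm, ← hr, ← hGw, hz, Matrix.sub_mulVec]
  set v : Fin d → ℝ := A⁻¹ *ᵥ z with hv
  have hAv : A *ᵥ v = z := by
    rw [hv, Matrix.mulVec_mulVec, Matrix.mul_nonsing_inv _ hAdet, Matrix.one_mulVec]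
  have ht0 : 0 ≤ z ⬝ᵥ v := by
    rw [hv]; exact psd_nonneg hA.inv.posSemidef z
  have hs0 : 0 ≤ r ⬝ᵥ A⁻¹ *ᵥ r := psd_nonneg hA.inv.posSemidef r
  have htv : z ⬝ᵥ v = w ⬝ᵥ (G - A) *ᵥ v := by
    rw [hz, dotProduct_comm, dot_symm hMs v w]
  have hwMw : 0 ≤ w ⬝ᵥ (G - A) *ᵥ w := psd_nonneg hGA w
  have hvMv : v ⬝ᵥ (G - A) *ᵥ v ≤ η * (z ⬝ᵥ v) := by
    have h := hMη v
    rw [hAv] at h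
    calc v ⬝ᵥ (G - A) *ᵥ v ≤ η * (v ⬝ᵥ z) := h
      _ = η * (z ⬝ᵥ v) := by rw [dotProduct_comm v z]
  have hCS : (w ⬝ᵥ (G - A) *ᵥ v) ^ 2 ≤ (w ⬝ᵥ (G - A) *ᵥ w) * (v ⬝ᵥ (G - A) *ᵥ v) :=
    psd_cauchy hGA w v
  have step1 : z ⬝ᵥ v ≤ η * (w ⬝ᵥ (G - A) *ᵥ w) := by
    rcases eq_or_lt_of_le ht0 with h | h
    · exact le_trans h.symm.le (mul_nonneg hη hwMw)
    · nlinarith [htv ▸ hCS, hvMv, hwMw, h]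
  have step2 : w ⬝ᵥ (G - A) *ᵥ w ≤ η * (w ⬝ᵥ A *ᵥ w) := hMη w
  have step3 : w ⬝ᵥ A *ᵥ w ≤ w ⬝ᵥ G *ᵥ w := by
    have h := psd_nonneg hGA w
    rw [Matrix.sub_mulVec, dotProduct_sub] at h
    linarith
  have step4 : w ⬝ᵥ G *ᵥ w ≤ r ⬝ᵥ A⁻¹ *ᵥ r := by
    have h := inv_quadform_ge hA hAs r w
    have hrw : r ⬝ᵥ w = w ⬝ᵥ G *ᵥ w := by
      rw [← hGw, dotProduct_comm]
    rw [hrw] at h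
    linarith
  have hwAw : 0 ≤ w ⬝ᵥ A *ᵥ w := psd_nonneg hA.posSemidef w
  have key : z ⬝ᵥ v ≤ η ^ 2 * (r ⬝ᵥ A⁻¹ *ᵥ r) := by
    nlinarith [step1, step2, step3, step4, hη, hwAw]
  have hlam1 : lambdaF A b (xk - w) = Real.sqrt (z ⬝ᵥ v) := by
    unfold lambdaF
    rw [hr', hv]
  have hlam2 : lambdaF A b xk = Real.sqrt (r ⬝ᵥ A⁻¹ *ᵥ r) := by
    unfold lambdaF
    rw [← hr]
  rw [hlam1, hlam2]
  calc Real.sqrt (z ⬝ᵥ v) ≤ Real.sqrt (η ^ 2 * (r ⬝ᵥ A⁻¹ *ᵥ r)) := Real.sqrt_le_sqrt key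
    _ = η * Real.sqrt (r ⬝ᵥ A⁻¹ *ᵥ r) := by
        rw [Real.sqrt_mul (sq_nonneg η), Real.sqrt_sq hη]

lemma vecMulVec_mulVec' (v w x : Fin d → ℝ) :
    vecMulVec v w *ᵥ x = (w ⬝ᵥ x) • v := by
  funext l
  simp only [Matrix.mulVec, dotProduct, Matrix.vecMulVec_apply, Pi.smul_apply,
    smul_eq_mul]
  rw [Finset.sum_mul]
  exact Finset.sum_congr rfl fun j _ => by ring

lemma vecMulVec_isSymm (v : Fin d → ℝ) : (vecMulVec v v).IsSymm := by
  unfold Matrix.IsSymm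
  ext a b
  simp [Matrix.vecMulVec_apply, mul_comm]

lemma trace_vecMulVec' (v : Fin d → ℝ) : (vecMulVec v v).trace = v ⬝ᵥ v := by
  simp [Matrix.trace, Matrix.diag, Matrix.vecMulVec_apply, dotProduct]

lemma invariant {A : Matrix (Fin d) (Fin d) ℝ} (hAsymm : A.IsSymm)
    (G : ℕ → Matrix (Fin d) (Fin d) ℝ) (i : ℕ → Fin d)
    (hG0symm : (G 0).IsSymm) (hG0 : (G 0 - A).PosSemidef)
    (hgreedy : ∀ k, ∀ j : Fin d, (G k - A) j j ≤ (G k - A) (i k) (i k))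
    (hGrec : ∀ k, G (k + 1) = SR1 (G k) A (Pi.single (i k) 1)) :
    ∀ k, k ≤ d → (G k).IsSymm ∧ (G k - A).PosSemidef ∧
      ∃ Z : Finset (Fin d), Z.card = k ∧
        (∀ j ∈ Z, (G k - A) *ᵥ Pi.single j 1 = 0) ∧
        (G k - A).trace ≤ (1 - (k : ℝ) / d) * (G 0 - A).trace := by
  intro k
  induction k with
  | zero =>
    intro _
    exact ⟨hG0symm, hG0, ∅, rfl, by simp, by simp⟩
  | succ k ih =>
    intro hk1
    have hk : k ≤ d := Nat.le_of_succ_le hk1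
    have hd : 0 < d := lt_of_lt_of_le (Nat.succ_pos k) hk1
    obtain ⟨hs, hpsd, Z, hZc, hZcol, htr⟩ := ih hk
    have hMs : (G k - A).IsSymm := hs.sub hAsymm
    have hT0 : 0 ≤ (G 0 - A).trace := psd_trace_nonneg hG0
    set u : Fin d → ℝ := Pi.single (i k) 1 with hu
    by_cases hcase : G k *ᵥ u = A *ᵥ u
    · -- trivial update: G k = A already
      have hG1 : G (k + 1) = G k := by rw [hGrec k, SR1, if_pos hcase]
      have hMu : (G k - A) *ᵥ u = 0 := by
        rw [Matrix.sub_mulVec, sub_eq_zero]; exact hcase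
      have hiidiag : (G k - A) (i k) (i k) = 0 := by
        have h := congrFun hMu (i k)
        simpa [hu] using h
      have hdiag : ∀ j, (G k - A) j j = 0 := fun j =>
        le_antisymm (hiidiag ▸ hgreedy k j) (psd_diag_nonneg hpsd j)
      obtain ⟨Z', -, hZ'c⟩ := Finset.exists_subset_card_eq
        (show k + 1 ≤ (Finset.univ : Finset (Fin d)).card by simpa using hk1)
      refine ⟨hG1 ▸ hs, hG1 ▸ hpsd, Z', hZ'c, ?_, ?_⟩
      · intro j _
        rw [hG1]
        exact psd_col_zero hpsd (hdiag j)
      · have htr0 : (G (k + 1) - A).trace = 0 := by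
          rw [hG1, Matrix.trace]
          exact Finset.sum_eq_zero fun j _ => hdiag j
        rw [htr0]
        apply mul_nonneg _ hT0
        rw [sub_nonneg, div_le_one (by exact_mod_cast hd)]
        exact_mod_cast hk1
    · -- genuine SR1 update
      set v : Fin d → ℝ := (G k - A) *ᵥ u with hv
      set c : ℝ := (G k - A) (i k) (i k) with hcdef
      have hMsym_entry : ∀ a b : Fin d, (G k - A) a b = (G k - A) b a := by
        intro a b
        simpa [Matrix.transpose_apply] using congrFun (congrFun hMs b) a
      have hvj : ∀ j, v j = (G k - A) j (i k) := by
        intro j; rw [hv, hu]; simp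
      have hvik : v (i k) = c := by rw [hvj, hcdef]
      have huv : u ⬝ᵥ ((G k - A) *ᵥ u) = c := by
        rw [hu, hcdef]; simp
      have hvu : u ᵥ* (G k - A) = v := by
        funext j
        rw [hu]
        simp only [Matrix.single_vecMul, one_mul, Pi.smul_apply, one_smul, Matrix.row_apply]
        rw [hvj j]
        exact hMsym_entry (i k) j
      have hv0 : v ≠ 0 := by
        intro h
        apply hcase
        rw [← sub_eq_zero, ← Matrix.sub_mulVec, ← hv, h]
      have hcpos : 0 < c := by
        rcases (psd_diag_nonneg hpsd (i k)).lt_or_eq with h | h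
        · exact h
        · exact absurd (psd_col_zero hpsd h.symm) hv0
      have hG1 : G (k + 1) = G k - c⁻¹ • vecMulVec v v := by
        rw [hGrec k, SR1, if_neg hcase, hvu, huv, ← hv]
      have hN : G (k + 1) - A = (G k - A) - c⁻¹ • vecMulVec v v := by
        rw [hG1, sub_right_comm]
      have hNs : (G (k + 1)).IsSymm := by
        rw [hG1]
        exact hs.sub ((vecMulVec_isSymm v).smul c⁻¹)
      have hNsymm : (G (k + 1) - A).IsSymm := hNs.sub hAsymm
      have hquad : ∀ x : Fin d → ℝ,
          x ⬝ᵥ (G (k + 1) - A) *ᵥ x = x ⬝ᵥ (G k - A) *ᵥ x - c⁻¹ * (x ⬝ᵥ v) ^ 2 := by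
        intro x
        rw [hN, Matrix.sub_mulVec, dotProduct_sub]
        congr 1
        rw [Matrix.smul_mulVec, vecMulVec_mulVec', dotProduct_smul,
          dotProduct_smul, smul_eq_mul, smul_eq_mul, dotProduct_comm v x]
        ring
      have hCSx : ∀ x : Fin d → ℝ, (x ⬝ᵥ v) ^ 2 ≤ (x ⬝ᵥ (G k - A) *ᵥ x) * c := by
        intro x
        have h := psd_cauchy hpsd x u
        rwa [← hv, huv] at h
      have hNpsd : (G (k + 1) - A).PosSemidef := by
        refine .of_dotProduct_mulVec_nonneg (isSymm_isHermitian hNsymm) fun x => ?_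
        have hsx : star x = x := by
          funext l; simp
        rw [hsx, hquad x]
        have h1 := hCSx x
        have h2 : c⁻¹ * ((x ⬝ᵥ v) ^ 2) ≤ c⁻¹ * ((x ⬝ᵥ (G k - A) *ᵥ x) * c) :=
          mul_le_mul_of_nonneg_left h1 (inv_nonneg.mpr hcpos.le)
        have h3 : c⁻¹ * ((x ⬝ᵥ (G k - A) *ᵥ x) * c) = x ⬝ᵥ (G k - A) *ᵥ x := by
          field_simp
        linarith
      have hik_notmem : i k ∉ Z := by
        intro hmem
        exact hv0 (by rw [hv, hu]; exact hZcol (i k) hmem)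
      have hcol : ∀ j ∈ insert (i k) Z, (G (k + 1) - A) *ᵥ Pi.single j 1 = 0 := by
        intro j hj
        have hform : (G (k + 1) - A) *ᵥ Pi.single j 1 =
            (G k - A) *ᵥ Pi.single j 1 - (c⁻¹ * v j) • v := by
          rw [hN, Matrix.sub_mulVec, Matrix.smul_mulVec, vecMulVec_mulVec']
          congr 1
          rw [dotProduct_single, mul_one, smul_smul]
        rcases Finset.mem_insert.mp hj with h | h
        · subst h
          rw [hform, ← hu, ← hv, hvik]
          rw [inv_mul_cancel₀ hcpos.ne', one_smul, sub_self]
        · rw [hform, hZcol j h]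
          have hvj0 : v j = 0 := by
            rw [hvj j, hMsym_entry j (i k)]
            have h0 := congrFun (hZcol j h) (i k)
            simpa using h0
          rw [hvj0, mul_zero, zero_smul, sub_zero]
      have hdiagZ : ∀ j ∈ Z, (G k - A) j j = 0 := by
        intro j hj
        have h0 := congrFun (hZcol j hj) j
        simpa using h0
      have hNtr : (G (k + 1) - A).trace = (G k - A).trace - c⁻¹ * (v ⬝ᵥ v) := by
        rw [hN, Matrix.trace_sub, Matrix.trace_smul, trace_vecMulVec', smul_eq_mul]
      have hvv2 : c * c ≤ v ⬝ᵥ v := by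
        have h := Finset.single_le_sum (f := fun j => v j * v j)
          (fun j _ => mul_self_nonneg (v j)) (Finset.mem_univ (i k))
        simp only [dotProduct, ← hvik]
        simpa using h
      have htrM_le : (G k - A).trace ≤ ((d : ℝ) - k) * c := by
        have hsum : (G k - A).trace = ∑ j ∈ Finset.univ \ Z, (G k - A) j j := by
          rw [Matrix.trace]
          refine (Finset.sum_subset (Finset.sdiff_subset) ?_).symm
          intro x _ hx
          have hxZ : x ∈ Z := by
            by_contra hxZ
            exact hx (Finset.mem_sdiff.mpr ⟨Finset.mem_univ x, hxZ⟩)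
          exact hdiagZ x hxZ
        rw [hsum]
        have hcard : (Finset.univ \ Z).card = d - k := by
          rw [Finset.card_sdiff_of_subset (Finset.subset_univ Z), hZc]
          simp
        have h := Finset.sum_le_card_nsmul (Finset.univ \ Z) (fun j => (G k - A) j j) c
          (fun j _ => hgreedy k j)
        rw [hcard] at h
        calc (∑ j ∈ Finset.univ \ Z, (G k - A) j j) ≤ (d - k) • c := h
          _ = ((d - k : ℕ) : ℝ) * c := by rw [nsmul_eq_mul]
          _ = ((d : ℝ) - k) * c := by rw [Nat.cast_sub hk]
      -- final arithmetic
      have hT : 0 ≤ (G k - A).trace := psd_trace_nonneg hpsd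
      have hD : (0 : ℝ) < d := by exact_mod_cast hd
      have hK1 : (k : ℝ) + 1 ≤ d := by exact_mod_cast hk1
      have hDK : (0 : ℝ) < (d : ℝ) - k := by linarith
      have h1 : (G (k + 1) - A).trace ≤ (G k - A).trace - c := by
        rw [hNtr]
        have h2 : c⁻¹ * (c * c) ≤ c⁻¹ * (v ⬝ᵥ v) :=
          mul_le_mul_of_nonneg_left hvv2 (inv_nonneg.mpr hcpos.le)
        have h3 : c⁻¹ * (c * c) = c := by field_simp
        linarith
      refine ⟨hNs, hNpsd, insert (i k) Z, ?_, hcol, ?_⟩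
      · rw [Finset.card_insert_of_notMem hik_notmem, hZc]
      · have hcast : ((k + 1 : ℕ) : ℝ) = (k : ℝ) + 1 := by push_cast; ring
        rw [hcast]
        have hmain : ((d : ℝ) - k) * (G (k + 1) - A).trace ≤
            ((d : ℝ) - k) * ((1 - ((k : ℝ) + 1) / d) * (G 0 - A).trace) := by
          calc ((d : ℝ) - k) * (G (k + 1) - A).trace
              ≤ ((d : ℝ) - k) * ((G k - A).trace - c) :=
                mul_le_mul_of_nonneg_left h1 hDK.le
            _ = ((d : ℝ) - k) * (G k - A).trace - ((d : ℝ) - k) * c := by ring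
            _ ≤ ((d : ℝ) - k) * (G k - A).trace - (G k - A).trace := by linarith [htrM_le]
            _ = ((d : ℝ) - k - 1) * (G k - A).trace := by ring
            _ ≤ ((d : ℝ) - k - 1) * ((1 - (k : ℝ) / d) * (G 0 - A).trace) :=
                mul_le_mul_of_nonneg_left htr (by linarith)
            _ = ((d : ℝ) - k) * ((1 - ((k : ℝ) + 1) / d) * (G 0 - A).trace) := by
                field_simp
                ring
        exact le_of_mul_le_mul_left hmain hDK

end SR1Proof

/-- Greedy SR1 method for quadratic minimization:
`λ_f(x_{k+1}) ≤ (1 - k/d) (τ_A(G_0)/m) λ_f(x_k)` for `0 ≤ k ≤ d`. -/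
theorem greedy_SR1_quadratic_minimization
    {d : ℕ} {m L : ℝ} (hm : 0 < m) (hmL : m ≤ L)
    {A : Matrix (Fin d) (Fin d) ℝ} (hAsymm : A.IsSymm)
    (hAlow : (A - m • (1 : Matrix (Fin d) (Fin d) ℝ)).PosSemidef)
    (hAup : (L • (1 : Matrix (Fin d) (Fin d) ℝ) - A).PosSemidef)
    (b : Fin d → ℝ)
    {G₀ : Matrix (Fin d) (Fin d) ℝ} (hG₀symm : G₀.IsSymm) (hG₀ : (G₀ - A).PosSemidef)
    (x : ℕ → Fin d → ℝ) (G : ℕ → Matrix (Fin d) (Fin d) ℝ) (i : ℕ → Fin d)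
    (hGinit : G 0 = G₀)
    (hxrec : ∀ k, x (k + 1) = x k - (G k)⁻¹ *ᵥ (A *ᵥ x k - b))
    (hgreedy : ∀ k, ∀ j : Fin d, (G k - A) j j ≤ (G k - A) (i k) (i k))
    (hGrec : ∀ k, G (k + 1) = SR1 (G k) A (Pi.single (i k) 1)) :
    ∀ k ≤ d,
      lambdaF A b (x (k + 1)) ≤ (1 - (k : ℝ) / d) * (tauA A G₀ / m) * lambdaF A b (x k) := by
  intro k hk
  have hG0psd : (G 0 - A).PosSemidef := by rw [hGinit]; exact hG₀
  have hG0symm' : (G 0).IsSymm := by rw [hGinit]; exact hG₀symm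
  obtain ⟨hGsym, hGpsd, Z, hZc, hZcol, htr⟩ :=
    SR1Proof.invariant hAsymm G i hG0symm' hG0psd hgreedy hGrec k hk
  have hmI : ∀ y : Fin d → ℝ, m * (y ⬝ᵥ y) ≤ y ⬝ᵥ A *ᵥ y := by
    intro y
    have h := SR1Proof.psd_nonneg hAlow y
    rw [Matrix.sub_mulVec, dotProduct_sub] at h
    have heq : y ⬝ᵥ (m • (1 : Matrix (Fin d) (Fin d) ℝ)) *ᵥ y = m * (y ⬝ᵥ y) := by
      rw [Matrix.smul_mulVec, Matrix.one_mulVec, dotProduct_smul, smul_eq_mul]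
    rw [heq] at h
    linarith
  have hApd : A.PosDef := by
    refine .of_dotProduct_mulVec_pos (SR1Proof.isSymm_isHermitian hAsymm) fun y hy => ?_
    have hsy : star y = y := funext fun l => by simp
    rw [hsy]
    have hyy : 0 < y ⬝ᵥ y := by
      rcases (Finset.sum_nonneg fun j (_ : j ∈ Finset.univ) =>
        mul_self_nonneg (y j) : (0:ℝ) ≤ y ⬝ᵥ y).lt_or_eq with h | h
      · exact h
      · exact absurd (dotProduct_self_eq_zero.mp h.symm) hy
    have h1 := hmI y
    nlinarith
  have hT0 : 0 ≤ (G 0 - A).trace := SR1Proof.psd_trace_nonneg hG0psd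
  have h1kd : 0 ≤ 1 - (k : ℝ) / d := by
    rcases Nat.eq_zero_or_pos d with h | h
    · have hk0 : k = 0 := Nat.le_zero.mp (h ▸ hk)
      subst hk0; subst h; simp
    · have hle : (k : ℝ) / d ≤ 1 := by
        rw [div_le_one (by exact_mod_cast h)]
        exact_mod_cast hk
      linarith
  set η : ℝ := (1 - (k : ℝ) / d) * ((G 0 - A).trace / m) with hη
  have hηnn : 0 ≤ η := mul_nonneg h1kd (div_nonneg hT0 hm.le)
  have hMη : ∀ y : Fin d → ℝ, y ⬝ᵥ (G k - A) *ᵥ y ≤ η * (y ⬝ᵥ A *ᵥ y) := by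
    intro y
    have hyy : (0:ℝ) ≤ y ⬝ᵥ y := Finset.sum_nonneg fun j _ => mul_self_nonneg (y j)
    have h1 : y ⬝ᵥ (G k - A) *ᵥ y ≤ (G k - A).trace * (y ⬝ᵥ y) :=
      SR1Proof.psd_quadform_le_trace hGpsd y
    have h2 : (G k - A).trace * (y ⬝ᵥ y) ≤ ((1 - (k : ℝ) / d) * (G 0 - A).trace) * (y ⬝ᵥ y) :=
      mul_le_mul_of_nonneg_right htr hyy
    have h3 : η * (m * (y ⬝ᵥ y)) ≤ η * (y ⬝ᵥ A *ᵥ y) :=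
      mul_le_mul_of_nonneg_left (hmI y) hηnn
    have h4 : η * (m * (y ⬝ᵥ y)) = ((1 - (k : ℝ) / d) * (G 0 - A).trace) * (y ⬝ᵥ y) := by
      rw [hη]
      field_simp
    linarith
  have hstep := SR1Proof.step_bound hApd hAsymm hGsym hGpsd hηnn hMη b (x k)
  rw [hxrec k]
  have htau : tauA A G₀ = (G 0 - A).trace := by rw [tauA, hGinit]
  rw [htau, ← hη]
  exact hstep
end

section
/- Let A be a positive definite symmetric d×d real matrix, b ∈ ℝ^d, x_0 ∈ ℝ^d, and G_0 ⪰ A symmetric. Define recursively: x_{k+1} := x_k − G_k⁻¹(A x_k − b); L_k an invertible matrix with L_kᵀ L_k = G_k⁻¹; ũ_k a standard basis vector maximizing eᵀ L_k⁻ᵀ A⁻¹ L_k⁻¹ e over e ∈ {e_1, …, e_d}; and G_{k+1} := BFGS(G_k, A, L_kᵀ ũ_k). Then for every k ≥ 0: λ_f(x_{k+1}) ≤ (1 − 1/d)^k · σ_A(G_0) · λ_f(x_k). -/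
open Matrix

namespace BFGSProof

variable {d : ℕ}

open scoped MatrixOrder

local notation "Mat" => Matrix (Fin d) (Fin d) ℝ


lemma psd_dot {N : Mat} (hN : N.PosSemidef) (y : Fin d → ℝ) :
    0 ≤ y ⬝ᵥ (N *ᵥ y) := by
  simpa using hN.dotProduct_mulVec_nonneg y

lemma pd_dot {N : Mat} (hN : N.PosDef) {y : Fin d → ℝ} (hy : y ≠ 0) :
    0 < y ⬝ᵥ (N *ᵥ y) := by
  simpa using hN.dotProduct_mulVec_pos hy

lemma psd_conj {N : Mat} (hN : N.PosSemidef) (B : Mat) :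
    (Bᵀ * N * B).PosSemidef := by
  simpa [conjTranspose_eq_transpose_of_trivial] using hN.conjTranspose_mul_mul_same B

lemma symm_of_psd {N : Mat} (hN : N.PosSemidef) : Nᵀ = N := by
  have := hN.isHermitian
  rwa [IsHermitian, conjTranspose_eq_transpose_of_trivial] at this

lemma trace_nonneg_of_psd {N : Mat} (hN : N.PosSemidef) : 0 ≤ N.trace := by
  rw [trace]
  apply Finset.sum_nonneg
  intro j _
  have h := psd_dot hN (Pi.single j 1)
  simpa [dotProduct, mulVec, Pi.single_apply, Finset.sum_ite_eq'] using h

lemma dot_self_nonneg (y : Fin d → ℝ) : 0 ≤ y ⬝ᵥ y :=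
  Finset.sum_nonneg fun j _ => mul_self_nonneg (y j)

lemma dot_sqrt {N : Mat} (hN : N.PosSemidef) (y : Fin d → ℝ) :
    y ⬝ᵥ (N *ᵥ y) = (CFC.sqrt N *ᵥ y) ⬝ᵥ (CFC.sqrt N *ᵥ y) := by
  have hs : (CFC.sqrt N)ᵀ = CFC.sqrt N := symm_of_psd (CFC.sqrt_nonneg N).posSemidef
  conv_lhs => rw [← CFC.sqrt_mul_sqrt_self N hN.nonneg]
  rw [← mulVec_mulVec, dotProduct_mulVec, ← mulVec_transpose, hs]

lemma dot_le_trace {N : Mat} (hN : N.PosSemidef) (y : Fin d → ℝ) :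
    y ⬝ᵥ (N *ᵥ y) ≤ N.trace * (y ⬝ᵥ y) := by
  set C := CFC.sqrt N with hCdef
  have hC : C.PosSemidef := (CFC.sqrt_nonneg N).posSemidef
  have hCs : Cᵀ = C := symm_of_psd hC
  rw [dot_sqrt hN y]
  have key : ∀ i, (C *ᵥ y) i * (C *ᵥ y) i ≤ (∑ j, C i j ^ 2) * (y ⬝ᵥ y) := by
    intro i
    have := Finset.sum_mul_sq_le_sq_mul_sq Finset.univ (fun j => C i j) y
    simpa [mulVec, dotProduct, sq] using this
  have htr : N.trace = ∑ i, ∑ j, C i j ^ 2 := by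
    conv_lhs => rw [← CFC.sqrt_mul_sqrt_self N hN.nonneg]
    rw [trace]
    congr 1
    ext i
    simp only [diag_apply, mul_apply, ← hCdef]
    congr 1
    ext j
    rw [sq]
    congr 1
    calc C j i = Cᵀ i j := rfl
    _ = C i j := by rw [hCs]
  calc (C *ᵥ y) ⬝ᵥ (C *ᵥ y) = ∑ i, (C *ᵥ y) i * (C *ᵥ y) i := rfl
    _ ≤ ∑ i, (∑ j, C i j ^ 2) * (y ⬝ᵥ y) := Finset.sum_le_sum fun i _ => key i
    _ = N.trace * (y ⬝ᵥ y) := by rw [htr, ← Finset.sum_mul]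

lemma normsq_mulVec_le {N : Mat} (hN : N.PosSemidef) {s : ℝ} (hs : N.trace ≤ s)
    (y : Fin d → ℝ) : (N *ᵥ y) ⬝ᵥ (N *ᵥ y) ≤ s ^ 2 * (y ⬝ᵥ y) := by
  have htr0 : 0 ≤ N.trace := trace_nonneg_of_psd hN
  set C := CFC.sqrt N with hCdef
  have step1 : (N *ᵥ y) ⬝ᵥ (N *ᵥ y) = (C *ᵥ y) ⬝ᵥ (N *ᵥ (C *ᵥ y)) := by
    rw [dot_sqrt hN (C *ᵥ y)]
    conv_lhs => rw [← CFC.sqrt_mul_sqrt_self N hN.nonneg, ← mulVec_mulVec]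
  calc (N *ᵥ y) ⬝ᵥ (N *ᵥ y) = (C *ᵥ y) ⬝ᵥ (N *ᵥ (C *ᵥ y)) := step1
    _ ≤ N.trace * ((C *ᵥ y) ⬝ᵥ (C *ᵥ y)) := dot_le_trace hN _
    _ = N.trace * (y ⬝ᵥ (N *ᵥ y)) := by rw [← dot_sqrt hN y]
    _ ≤ N.trace * (N.trace * (y ⬝ᵥ y)) := by
        exact mul_le_mul_of_nonneg_left (dot_le_trace hN y) htr0
    _ ≤ s * (s * (y ⬝ᵥ y)) := by
        apply mul_le_mul hs _ _ (le_trans htr0 hs)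
        · exact mul_le_mul_of_nonneg_right hs (dot_self_nonneg y)
        · exact mul_nonneg htr0 (dot_self_nonneg y)
    _ = s ^ 2 * (y ⬝ᵥ y) := by ring


lemma inv_sub_inv_psd {A G : Mat} (hA : A.PosDef) (hAd : IsUnit A.det)
    (hGd : IsUnit G.det) (hGsymm : Gᵀ = G) (hGA : (G - A).PosSemidef) :
    (A⁻¹ - G⁻¹).PosSemidef := by
  haveI := A.invertibleOfIsUnitDet hAd
  haveI := G.invertibleOfIsUnitDet hGd
  have hDsymm : (G - A)ᵀ = G - A := symm_of_psd hGA
  have hinner : ((G - A) * A⁻¹ * (G - A) + (G - A)).PosSemidef := by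
    have h1 : ((G - A)ᵀ * A⁻¹ * (G - A)).PosSemidef := psd_conj hA.inv.posSemidef (G - A)
    rw [hDsymm] at h1
    exact h1.add hGA
  have h2 : ((G⁻¹)ᵀ * ((G - A) * A⁻¹ * (G - A) + (G - A)) * G⁻¹).PosSemidef :=
    psd_conj hinner G⁻¹
  have hGinvsymm : (G⁻¹)ᵀ = G⁻¹ := by rw [transpose_nonsing_inv, hGsymm]
  rw [hGinvsymm] at h2
  have key : G⁻¹ * ((G - A) * A⁻¹ * (G - A) + (G - A)) * G⁻¹ = A⁻¹ - G⁻¹ := by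
    simp only [mul_sub, sub_mul, mul_add, add_mul, Matrix.mul_assoc,
      Matrix.mul_inv_cancel_left_of_invertible, Matrix.inv_mul_cancel_left_of_invertible,
      Matrix.mul_inv_of_invertible, Matrix.inv_mul_of_invertible, Matrix.mul_one,
      Matrix.one_mul, mul_one, one_mul]
    abel
  rwa [key] at h2

lemma step1 {A G : Mat} (hA : A.PosDef) (hGsymm : G.IsSymm) (hGA : (G - A).PosSemidef)
    (b xk : Fin d → ℝ) :
    lambdaF A b (xk - G⁻¹ *ᵥ (A *ᵥ xk - b)) ≤ sigmaA A G * lambdaF A b xk := by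
  have hGsymm' : Gᵀ = G := hGsymm
  have hAsymm : Aᵀ = A := symm_of_psd hA.posSemidef
  have hG : G.PosDef := by
    have := hA.add_posSemidef hGA
    simpa using this
  have hAd : IsUnit A.det := isUnit_iff_isUnit_det _ |>.mp hA.isUnit
  have hGd : IsUnit G.det := isUnit_iff_isUnit_det _ |>.mp hG.isUnit
  haveI := A.invertibleOfIsUnitDet hAd
  haveI := G.invertibleOfIsUnitDet hGd
  -- square root of A
  set R := CFC.sqrt A with hRdef
  have hRpsd : R.PosSemidef := (CFC.sqrt_nonneg A).posSemidef
  have hRsymm : Rᵀ = R := symm_of_psd hRpsd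
  have hRR : R * R = A := CFC.sqrt_mul_sqrt_self A hA.posSemidef.nonneg
  have hRd : IsUnit R.det := by
    have hdet : R.det * R.det = A.det := by rw [← det_mul, hRR]
    have hAdet : 0 < A.det := hA.det_pos
    rw [isUnit_iff_ne_zero]
    intro h
    rw [h, mul_zero] at hdet
    exact absurd hdet.symm (ne_of_gt hAdet)
  haveI := R.invertibleOfIsUnitDet hRd
  have hRinvsymm : (R⁻¹)ᵀ = R⁻¹ := by rw [transpose_nonsing_inv, hRsymm]
  have hAinv : A⁻¹ = R⁻¹ * R⁻¹ := by rw [← hRR, Matrix.mul_inv_rev]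
  -- the matrix N
  set N : Mat := 1 - R * G⁻¹ * R with hNdef
  have hNpsd : N.PosSemidef := by
    have hNeq : N = Rᵀ * (A⁻¹ - G⁻¹) * R := by
      rw [hRsymm, hNdef, hAinv]
      simp only [mul_sub, sub_mul, Matrix.mul_assoc,
        Matrix.mul_inv_cancel_left_of_invertible, Matrix.inv_mul_cancel_left_of_invertible,
        Matrix.mul_inv_of_invertible, Matrix.inv_mul_of_invertible]
    rw [hNeq]
    exact psd_conj (inv_sub_inv_psd hA hAd hGd hGsymm' hGA) R
  -- traces
  have htrone : (1 : Mat).trace = (d : ℝ) := by simp [trace_one]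
  have htrM : (R * G⁻¹ * R).trace = (G⁻¹ * A).trace := by
    rw [Matrix.mul_assoc, trace_mul_comm R (G⁻¹ * R), Matrix.mul_assoc, hRR]
  have htrQ : (R⁻¹ * G * R⁻¹).trace = (G * A⁻¹).trace := by
    rw [Matrix.mul_assoc, trace_mul_comm R⁻¹ (G * R⁻¹), Matrix.mul_assoc, ← hAinv]
  have hsigma : sigmaA A G = (G * A⁻¹).trace - (d : ℝ) := by
    rw [sigmaA, Matrix.sub_mul, Matrix.mul_inv_of_invertible, trace_sub, htrone]
  -- 0 ≤ tr M + tr Q - 2d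
  have hMQtr : 0 ≤ (G⁻¹ * A).trace + (G * A⁻¹).trace - 2 * (d : ℝ) := by
    set M : Mat := R * G⁻¹ * R with hMdef
    set Q : Mat := R⁻¹ * G * R⁻¹ with hQdef
    have hMsymm : (M - 1)ᵀ = M - 1 := by
      rw [transpose_sub, transpose_one, hMdef, transpose_mul, transpose_mul,
        transpose_nonsing_inv, hGsymm', hRsymm, Matrix.mul_assoc]
    have hQpsd : Q.PosSemidef := by
      have : ((R⁻¹)ᵀ * G * R⁻¹).PosSemidef := psd_conj hG.posSemidef R⁻¹
      rwa [hRinvsymm] at this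
    have hPpsd : ((M - 1)ᵀ * Q * (M - 1)).PosSemidef := psd_conj hQpsd (M - 1)
    rw [hMsymm] at hPpsd
    have hPeq : (M - 1) * Q * (M - 1) = M + Q - 1 - 1 := by
      rw [hMdef, hQdef]
      simp only [mul_sub, sub_mul, mul_add, add_mul, Matrix.mul_assoc,
        Matrix.mul_inv_cancel_left_of_invertible, Matrix.inv_mul_cancel_left_of_invertible,
        Matrix.mul_inv_of_invertible, Matrix.inv_mul_of_invertible, Matrix.mul_one,
        Matrix.one_mul, mul_one, one_mul]
      abel
    have := trace_nonneg_of_psd hPpsd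
    rw [hPeq, trace_sub, trace_sub, trace_add, htrone, htrM, htrQ] at this
    linarith
  -- trace of N ≤ sigma
  have htrN : N.trace = (d : ℝ) - (G⁻¹ * A).trace := by
    rw [hNdef, trace_sub, htrone, htrM]
  have htrNsigma : N.trace ≤ sigmaA A G := by
    rw [htrN, hsigma]; linarith
  have hNtr0 : 0 ≤ N.trace := trace_nonneg_of_psd hNpsd
  have hsigma0 : 0 ≤ sigmaA A G := le_trans hNtr0 htrNsigma
  -- vectors
  set g : Fin d → ℝ := A *ᵥ xk - b with hgdef
  set y : Fin d → ℝ := R⁻¹ *ᵥ g with hydef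
  have hvmul : ∀ z : Fin d → ℝ, z ᵥ* R⁻¹ = R⁻¹ *ᵥ z := by
    intro z
    conv_lhs => rw [← hRinvsymm, vecMul_transpose]
  -- lambdaF xk = sqrt (y ⬝ᵥ y)
  have hq : g ⬝ᵥ (A⁻¹ *ᵥ g) = y ⬝ᵥ y := by
    rw [hAinv, hydef, ← mulVec_mulVec, dotProduct_mulVec, hvmul]
  -- new gradient
  have hgplus : A *ᵥ (xk - G⁻¹ *ᵥ (A *ᵥ xk - b)) - b = R *ᵥ (N *ᵥ y) := by
    have hmat : R * N * R⁻¹ = 1 - A * G⁻¹ := by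
      rw [hNdef, ← hRR]
      simp only [mul_sub, sub_mul, Matrix.mul_assoc,
        Matrix.mul_inv_cancel_left_of_invertible, Matrix.inv_mul_cancel_left_of_invertible,
        Matrix.mul_inv_of_invertible, Matrix.inv_mul_of_invertible, Matrix.mul_one,
        Matrix.one_mul, mul_one, one_mul]
    have : R *ᵥ (N *ᵥ y) = (R * N * R⁻¹) *ᵥ g := by
      rw [hydef, ← mulVec_mulVec, ← mulVec_mulVec]
    rw [this, hmat, sub_mulVec, one_mulVec, ← mulVec_mulVec, mulVec_sub, ← hgdef, hgdef]
    abel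
  -- lambdaF x⁺ squared
  have hqplus : (A *ᵥ (xk - G⁻¹ *ᵥ (A *ᵥ xk - b)) - b) ⬝ᵥ
      (A⁻¹ *ᵥ (A *ᵥ (xk - G⁻¹ *ᵥ (A *ᵥ xk - b)) - b)) = (N *ᵥ y) ⬝ᵥ (N *ᵥ y) := by
    have hcancel : ∀ z : Fin d → ℝ, R⁻¹ *ᵥ (R *ᵥ z) = z := by
      intro z
      rw [mulVec_mulVec, Matrix.inv_mul_of_invertible, one_mulVec]
    rw [hgplus, hAinv, ← Matrix.mulVec_mulVec, hcancel, dotProduct_mulVec, hvmul, hcancel]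
  -- finish
  have hkey : (N *ᵥ y) ⬝ᵥ (N *ᵥ y) ≤ (sigmaA A G) ^ 2 * (y ⬝ᵥ y) :=
    normsq_mulVec_le hNpsd htrNsigma y
  rw [lambdaF, lambdaF, hqplus, ← hgdef, hq]
  calc Real.sqrt ((N *ᵥ y) ⬝ᵥ (N *ᵥ y)) ≤ Real.sqrt ((sigmaA A G) ^ 2 * (y ⬝ᵥ y)) :=
        Real.sqrt_le_sqrt hkey
    _ = sigmaA A G * Real.sqrt (y ⬝ᵥ y) := by
        rw [Real.sqrt_mul (sq_nonneg _), Real.sqrt_sq hsigma0]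

lemma vecMulVec_transpose' (a b : Fin d → ℝ) : (vecMulVec a b)ᵀ = vecMulVec b a := by
  ext i j
  simp [vecMulVec_apply, transpose_apply, mul_comm]

lemma vecMulVec_mulVec' (a b v : Fin d → ℝ) : vecMulVec a b *ᵥ v = (b ⬝ᵥ v) • a := by
  ext i
  simp only [mulVec, vecMulVec_apply, dotProduct, Pi.smul_apply, smul_eq_mul,
    Finset.sum_mul]
  exact Finset.sum_congr rfl fun j _ => by ring

lemma trace_vecMulVec_mul (a b : Fin d → ℝ) (C : Mat) :
    (vecMulVec a b * C).trace = b ⬝ᵥ (C *ᵥ a) := by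
  simp only [trace, diag_apply, mul_apply, vecMulVec_apply, dotProduct, mulVec]
  rw [Finset.sum_comm]
  exact Finset.sum_congr rfl fun j _ => by rw [Finset.mul_sum]; exact Finset.sum_congr rfl fun i _ => by ring

lemma dot_mulVec_symm {M : Mat} (hM : Mᵀ = M) (v u : Fin d → ℝ) :
    v ⬝ᵥ (M *ᵥ u) = u ⬝ᵥ (M *ᵥ v) := by
  conv_lhs => rw [dotProduct_mulVec, ← hM, vecMul_transpose]
  exact dotProduct_comm _ _

lemma step2 {A G L : Mat} (hA : A.PosDef) (hGsymm : G.IsSymm) (hGA : (G - A).PosSemidef)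
    (hL : IsUnit L) (hLG : Lᵀ * L = G⁻¹) (i₀ : Fin d)
    (hgr : ∀ j : Fin d, Pi.single j 1 ⬝ᵥ (((L⁻¹)ᵀ * A⁻¹ * L⁻¹) *ᵥ Pi.single j 1) ≤
        Pi.single i₀ 1 ⬝ᵥ (((L⁻¹)ᵀ * A⁻¹ * L⁻¹) *ᵥ Pi.single i₀ 1)) :
    (BFGS G A (Lᵀ *ᵥ Pi.single i₀ 1)).IsSymm ∧
      ((BFGS G A (Lᵀ *ᵥ Pi.single i₀ 1)) - A).PosSemidef ∧
      sigmaA A (BFGS G A (Lᵀ *ᵥ Pi.single i₀ 1)) ≤ (1 - 1 / (d : ℝ)) * sigmaA A G := by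
  have hd : 0 < d := i₀.pos
  have hdpos : (0 : ℝ) < d := by exact_mod_cast hd
  have hGsymm' : Gᵀ = G := hGsymm
  have hAsymm : Aᵀ = A := symm_of_psd hA.posSemidef
  have hG : G.PosDef := by
    have := hA.add_posSemidef hGA
    simpa using this
  have hAd : IsUnit A.det := isUnit_iff_isUnit_det _ |>.mp hA.isUnit
  have hGd : IsUnit G.det := isUnit_iff_isUnit_det _ |>.mp hG.isUnit
  have hLd : IsUnit L.det := isUnit_iff_isUnit_det _ |>.mp hL
  have hLTd : IsUnit Lᵀ.det := by rwa [det_transpose]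
  haveI := A.invertibleOfIsUnitDet hAd
  haveI := G.invertibleOfIsUnitDet hGd
  haveI := L.invertibleOfIsUnitDet hLd
  haveI := Lᵀ.invertibleOfIsUnitDet hLTd
  set e : Fin d → ℝ := Pi.single i₀ 1 with hedef
  set u : Fin d → ℝ := Lᵀ *ᵥ e with hudef
  have hu0 : u ≠ 0 := by
    intro h
    have he : e = (Lᵀ)⁻¹ *ᵥ u := by
      rw [hudef, mulVec_mulVec, Matrix.inv_mul_of_invertible, one_mulVec]
    rw [h, mulVec_zero] at he
    have : e i₀ = 1 := Pi.single_eq_same i₀ 1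
    rw [he] at this
    simp at this
  have hGfact : G = L⁻¹ * (L⁻¹)ᵀ := by
    have : G = (Lᵀ * L)⁻¹ := by
      rw [hLG, Matrix.nonsing_inv_nonsing_inv G hGd]
    rw [this, Matrix.mul_inv_rev, transpose_nonsing_inv]
  have hGLT : G * Lᵀ = L⁻¹ := by
    rw [hGfact, transpose_nonsing_inv, Matrix.mul_assoc, Matrix.inv_mul_of_invertible,
      Matrix.mul_one]
  set w : Fin d → ℝ := L⁻¹ *ᵥ e with hwdef
  have hGu : G *ᵥ u = w := by
    rw [hudef, mulVec_mulVec, hGLT]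
  have hLw : L *ᵥ w = e := by
    rw [hwdef, mulVec_mulVec, Matrix.mul_inv_of_invertible, one_mulVec]
  have huGu : u ⬝ᵥ (G *ᵥ u) = 1 := by
    rw [hGu, hudef, dotProduct_comm, dotProduct_mulVec, vecMul_transpose, hLw]
    simp [hedef, dotProduct, Pi.single_apply]
  have huvecG : u ᵥ* G = w := by
    rw [← hGsymm', vecMul_transpose, hGu]
  have huvecA : u ᵥ* A = A *ᵥ u := by
    conv_lhs => rw [← hAsymm, vecMul_transpose]
  have hq0 : 0 < u ⬝ᵥ (A *ᵥ u) := by simpa using hA.dotProduct_mulVec_pos hu0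
  have hqne : u ⬝ᵥ (A *ᵥ u) ≠ 0 := ne_of_gt hq0
  -- unfold BFGS
  have hBFGS : BFGS G A u = G - vecMulVec w w
      + (u ⬝ᵥ (A *ᵥ u))⁻¹ • vecMulVec (A *ᵥ u) (A *ᵥ u) := by
    rw [BFGS, if_neg hu0, huGu, hGu, huvecG, huvecA, inv_one, one_smul]
  -- symmetry
  have hsymm : (BFGS G A u)ᵀ = BFGS G A u := by
    rw [hBFGS, transpose_add, transpose_sub, transpose_smul, vecMulVec_transpose',
      vecMulVec_transpose', hGsymm']
  refine ⟨hsymm, ?_, ?_⟩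
  · -- positive semidefiniteness of BFGS G A u - A
    refine PosSemidef.of_dotProduct_mulVec_nonneg ?_ ?_
    · rw [IsHermitian, conjTranspose_eq_transpose_of_trivial, transpose_sub, hsymm, hAsymm]
    · intro v'
      have hstar : (star v' : Fin d → ℝ) = v' := by simp
      rw [hstar]
      set v : Fin d → ℝ := v' with hvdef
      set c : ℝ := u ⬝ᵥ (G *ᵥ v) with hcdef
      set p : ℝ := u ⬝ᵥ (A *ᵥ v) with hpdef
      set q : ℝ := u ⬝ᵥ (A *ᵥ u) with hqdef
      have hwv : w ⬝ᵥ v = c := by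
        rw [hcdef, dotProduct_mulVec, huvecG]
      have hAuv : (A *ᵥ u) ⬝ᵥ v = p := by
        rw [hpdef, dotProduct_mulVec, huvecA]
      have h1 : v ⬝ᵥ w = c := by rw [dotProduct_comm]; exact hwv
      have h2 : v ⬝ᵥ (A *ᵥ u) = p := by rw [dotProduct_comm]; exact hAuv
      have h3 : v ⬝ᵥ (G *ᵥ u) = c := by
        rw [dot_mulVec_symm hGsymm', ← hcdef]
      have hexp : v ⬝ᵥ ((BFGS G A u - A) *ᵥ v)
          = v ⬝ᵥ (G *ᵥ v) - c * c + p * p * q⁻¹ - v ⬝ᵥ (A *ᵥ v) := by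
        rw [hBFGS]
        simp only [sub_mulVec, add_mulVec, smul_mulVec, vecMulVec_mulVec',
          dotProduct_sub, dotProduct_add, dotProduct_smul, smul_eq_mul, hwv, hAuv, h1, h2]
        ring
      rw [hexp]
      -- key quadratic inequality
      have hkey := psd_dot hGA (v - c • u)
      have hexp2 : (v - c • u) ⬝ᵥ ((G - A) *ᵥ (v - c • u))
          = (v ⬝ᵥ (G *ᵥ v) - v ⬝ᵥ (A *ᵥ v)) - 2 * c * (c - p) + c * c * (1 - q) := by
        simp only [sub_mulVec, mulVec_sub, mulVec_smul, sub_dotProduct, smul_dotProduct,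
          dotProduct_sub, dotProduct_smul, smul_eq_mul, huGu, h3, h2, ← hcdef, ← hpdef,
          ← hqdef]
        ring
      rw [hexp2] at hkey
      have hsq : 0 ≤ (c * q - p) ^ 2 := sq_nonneg _
      have hqr : q * (p * p * q⁻¹) = p * p := by field_simp
      nlinarith [mul_pos hq0 hq0, hq0, hkey, hsq, hqr]
  · -- sigma bound
    set H : Mat := (L⁻¹)ᵀ * A⁻¹ * L⁻¹ with hHdef
    set hii : ℝ := Pi.single i₀ 1 ⬝ᵥ (H *ᵥ Pi.single i₀ 1) with hiidef
    have hii_def : ∀ j : Fin d, Pi.single j 1 ⬝ᵥ (H *ᵥ Pi.single j 1) = H j j := by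
      intro j
      simp [mulVec, dotProduct, Pi.single_apply]
    have htrH : H.trace ≤ (d : ℝ) * hii := by
      rw [trace]
      calc ∑ j, H.diag j = ∑ j, Pi.single j 1 ⬝ᵥ (H *ᵥ Pi.single j 1) :=
            Finset.sum_congr rfl fun j _ => (hii_def j).symm
        _ ≤ ∑ _j : Fin d, hii := Finset.sum_le_sum fun j _ => hgr j
        _ = (d : ℝ) * hii := by simp [Finset.sum_const, nsmul_eq_mul]
    have htrH2 : H.trace = (G * A⁻¹).trace := by
      rw [hHdef, trace_mul_comm ((L⁻¹)ᵀ * A⁻¹) L⁻¹, ← Matrix.mul_assoc, ← hGfact]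
    have htrone : (1 : Mat).trace = (d : ℝ) := by simp [trace_one]
    have hsigma : sigmaA A G = (G * A⁻¹).trace - (d : ℝ) := by
      rw [sigmaA, Matrix.sub_mul, Matrix.mul_inv_of_invertible, trace_sub, htrone]
    have hwAw : hii = w ⬝ᵥ (A⁻¹ *ᵥ w) := by
      rw [hiidef, hHdef, ← hedef, ← Matrix.mulVec_mulVec, ← Matrix.mulVec_mulVec,
        ← hwdef, dotProduct_mulVec, vecMul_transpose, ← hwdef]
    have hAuAinv : (A *ᵥ u) ⬝ᵥ (A⁻¹ *ᵥ (A *ᵥ u)) = u ⬝ᵥ (A *ᵥ u) := by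
      rw [Matrix.mulVec_mulVec u A⁻¹ A, Matrix.inv_mul_of_invertible, one_mulVec,
        dotProduct_comm]
    have hsplus : sigmaA A (BFGS G A u) = sigmaA A G - hii + 1 := by
      rw [sigmaA, hBFGS]
      have hmat : (G - vecMulVec w w + (u ⬝ᵥ (A *ᵥ u))⁻¹ • vecMulVec (A *ᵥ u) (A *ᵥ u) - A)
            * A⁻¹
          = (G - A) * A⁻¹ - vecMulVec w w * A⁻¹
            + (u ⬝ᵥ (A *ᵥ u))⁻¹ • (vecMulVec (A *ᵥ u) (A *ᵥ u) * A⁻¹) := by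
        simp only [Matrix.sub_mul, Matrix.add_mul, Matrix.smul_mul]
        abel
      rw [hmat, trace_add, trace_sub, trace_smul, trace_vecMulVec_mul, trace_vecMulVec_mul,
        hAuAinv, ← hwAw, smul_eq_mul, inv_mul_cancel₀ hqne, ← sigmaA]
    rw [hsplus]
    have h3 : sigmaA A G + (d : ℝ) ≤ (d : ℝ) * hii := by
      rw [hsigma, ← htrH2]
      linarith [htrH]
    have h4 : (1 - 1 / (d : ℝ)) * sigmaA A G = sigmaA A G - sigmaA A G / d := by ring
    have h5 : sigmaA A G / d ≤ hii - 1 := (div_le_iff₀ hdpos).mpr (by linarith)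
    rw [h4]
    linarith


end BFGSProof

/-- Greedy scaled BFGS method for quadratic minimization:
`λ_f(x_{k+1}) ≤ (1 - 1/d)^k σ_A(G_0) λ_f(x_k)`. -/
theorem greedy_BFGS_quadratic_minimization
    {d : ℕ} {A : Matrix (Fin d) (Fin d) ℝ} (hA : A.PosDef) (hAsymm : A.IsSymm)
    (b : Fin d → ℝ)
    {G₀ : Matrix (Fin d) (Fin d) ℝ} (hG₀symm : G₀.IsSymm) (hG₀ : (G₀ - A).PosSemidef)
    (x : ℕ → Fin d → ℝ) (G : ℕ → Matrix (Fin d) (Fin d) ℝ)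
    (Lm : ℕ → Matrix (Fin d) (Fin d) ℝ) (i : ℕ → Fin d)
    (hGinit : G 0 = G₀)
    (hxrec : ∀ k, x (k + 1) = x k - (G k)⁻¹ *ᵥ (A *ᵥ x k - b))
    (hLinv : ∀ k, IsUnit (Lm k))
    (hLG : ∀ k, (Lm k)ᵀ * Lm k = (G k)⁻¹)
    (hgreedy : ∀ k, ∀ j : Fin d,
      Pi.single j 1 ⬝ᵥ ((((Lm k)⁻¹)ᵀ * A⁻¹ * (Lm k)⁻¹) *ᵥ Pi.single j 1) ≤
        Pi.single (i k) 1 ⬝ᵥ ((((Lm k)⁻¹)ᵀ * A⁻¹ * (Lm k)⁻¹) *ᵥ Pi.single (i k) 1))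
    (hGrec : ∀ k, G (k + 1) = BFGS (G k) A ((Lm k)ᵀ *ᵥ Pi.single (i k) 1)) :
    ∀ k : ℕ,
      lambdaF A b (x (k + 1)) ≤ (1 - 1 / (d : ℝ)) ^ k * sigmaA A G₀ * lambdaF A b (x k) := by
  have hd : 0 < d := (i 0).pos
  have hd1 : (1 : ℝ) ≤ (d : ℝ) := by exact_mod_cast hd
  have hfac0 : (0 : ℝ) ≤ 1 - 1 / (d : ℝ) := by
    have h1 : 1 / (d : ℝ) ≤ 1 := by
      rw [div_le_one (by linarith : (0:ℝ) < (d:ℝ))]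
      exact hd1
    linarith
  have inv : ∀ k, (G k).IsSymm ∧ ((G k) - A).PosSemidef ∧
      sigmaA A (G k) ≤ (1 - 1 / (d : ℝ)) ^ k * sigmaA A G₀ := by
    intro k
    induction k with
    | zero =>
        refine ⟨by rw [hGinit]; exact hG₀symm, by rw [hGinit]; exact hG₀, ?_⟩
        rw [hGinit, pow_zero, one_mul]
    | succ k ih =>
        obtain ⟨hs, hp, hb⟩ := ih
        have hstep := BFGSProof.step2 hA hs hp (hLinv k) (hLG k) (i k) (hgreedy k)
        rw [hGrec k]
        refine ⟨hstep.1, hstep.2.1, ?_⟩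
        calc sigmaA A (BFGS (G k) A ((Lm k)ᵀ *ᵥ Pi.single (i k) 1))
            ≤ (1 - 1 / (d : ℝ)) * sigmaA A (G k) := hstep.2.2
          _ ≤ (1 - 1 / (d : ℝ)) * ((1 - 1 / (d : ℝ)) ^ k * sigmaA A G₀) :=
              mul_le_mul_of_nonneg_left hb hfac0
          _ = (1 - 1 / (d : ℝ)) ^ (k + 1) * sigmaA A G₀ := by ring
  intro k
  obtain ⟨hs, hp, hb⟩ := inv k
  have h1 : lambdaF A b (x (k + 1)) ≤ sigmaA A (G k) * lambdaF A b (x k) := by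
    rw [hxrec k]
    exact BFGSProof.step1 hA hs hp b (x k)
  have h2 : 0 ≤ lambdaF A b (x k) := by rw [lambdaF]; exact Real.sqrt_nonneg _
  calc lambdaF A b (x (k + 1)) ≤ sigmaA A (G k) * lambdaF A b (x k) := h1
    _ ≤ ((1 - 1 / (d : ℝ)) ^ k * sigmaA A G₀) * lambdaF A b (x k) :=
        mul_le_mul_of_nonneg_right hb h2
    _ = (1 - 1 / (d : ℝ)) ^ k * sigmaA A G₀ * lambdaF A b (x k) := by ring
end

section
/- Let (Ω, P) be a probability space, let (X_k)_{k∈ℕ} be a sequence of nonnegative measurable real-valued random variables, and let a > 0 and t > 1 be reals such that E[X_k] ≤ a·(1 − 1/t)^k for every k ≥ 0. Then for every δ ∈ (0,1), with probability at least 1 − δ it holds that X_k ≤ (a·t²/δ)·(1 − 1/(t+1))^k for all k ≥ 0 simultaneously. -/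
open MeasureTheory

/-- From linearly decaying expectations to a high-probability uniform bound:
if `E[X_k] ≤ a (1 - 1/t)^k` for nonnegative random variables `X_k`, then with probability
at least `1 - δ`, `X_k ≤ (a t²/δ)(1 - 1/(t+1))^k` for all `k` simultaneously. -/
theorem high_probability_linear_decay
    {Ω : Type*} [MeasurableSpace Ω] (P : Measure Ω) [IsProbabilityMeasure P]
    (X : ℕ → Ω → ℝ) (hmeas : ∀ k, Measurable (X k))
    (hnonneg : ∀ k ω, 0 ≤ X k ω)
    (hint : ∀ k, Integrable (X k) P)
    {a t : ℝ} (ha : 0 < a) (ht : 1 < t)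
    (hE : ∀ k, (∫ ω, X k ω ∂P) ≤ a * (1 - 1 / t) ^ k)
    {δ : ℝ} (hδ : δ ∈ Set.Ioo (0 : ℝ) 1) :
    ENNReal.ofReal (1 - δ) ≤
      P {ω | ∀ k : ℕ, X k ω ≤ a * t ^ 2 / δ * (1 - 1 / (t + 1)) ^ k} := by
  obtain ⟨hδ0, hδ1⟩ := hδ
  have ht0 : 0 < t := by linarith
  have ht1 : 0 < t + 1 := by linarith
  set M : ℕ → ℝ := fun k => a * t ^ 2 / δ * (1 - 1 / (t + 1)) ^ k with hMdef
  have hr2 : (0:ℝ) < 1 - 1 / (t + 1) := by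
    rw [sub_pos, div_lt_one ht1]; linarith
  have hr1 : (0:ℝ) ≤ 1 - 1 / t := by
    rw [sub_nonneg, div_le_one ht0]; linarith
  have hMpos : ∀ k, 0 < M k := fun k => by
    apply mul_pos (div_pos (mul_pos ha (pow_pos ht0 2)) hδ0) (pow_pos hr2 k)
  set r : ℝ := 1 - 1 / t ^ 2 with hrdef
  have hrpos : (0:ℝ) ≤ r := by
    rw [hrdef, sub_nonneg, div_le_one (pow_pos ht0 2)]; nlinarith
  have hrlt : r < 1 := by
    rw [hrdef]; have : (0:ℝ) < 1 / t ^ 2 := by positivity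
    linarith
  -- key pointwise bound for Markov
  have hratio : ∀ k, (∫ ω, X k ω ∂P) / M k ≤ δ / t ^ 2 * r ^ k := by
    intro k
    rw [div_le_iff₀ (hMpos k)]
    calc (∫ ω, X k ω ∂P) ≤ a * (1 - 1 / t) ^ k := hE k
      _ = δ / t ^ 2 * r ^ k * M k := by
          rw [hMdef, hrdef]
          have ht0' : t ≠ 0 := ne_of_gt ht0
          have ht1' : t + 1 ≠ 0 := ne_of_gt ht1
          have hδ' : δ ≠ 0 := ne_of_gt hδ0
          have h1 : (1:ℝ) - 1 / t = (t - 1) / t := by field_simp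
          have h2 : (1:ℝ) - 1 / (t + 1) = t / (t + 1) := by field_simp; ring
          have h3 : (1:ℝ) - 1 / t ^ 2 = ((t-1)/t) * ((t+1)/t) := by
            field_simp; ring
          rw [h1, h2, h3, mul_pow]
          simp only [div_pow]
          have hpt : (t:ℝ) ^ k ≠ 0 := pow_ne_zero k ht0'
          have hpt1 : ((t:ℝ)+1) ^ k ≠ 0 := pow_ne_zero k ht1'
          field_simp
  -- Markov bound on each bad event
  have hmarkov : ∀ k, P {ω | M k < X k ω} ≤ ENNReal.ofReal (δ / t ^ 2 * r ^ k) := by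
    intro k
    have hsub : P {ω | M k < X k ω} ≤ P {ω | M k ≤ X k ω} :=
      measure_mono (fun ω (h : M k < X k ω) => le_of_lt h)
    refine hsub.trans ?_
    have hmk := mul_meas_ge_le_integral_of_nonneg
      (Filter.Eventually.of_forall (hnonneg k)) (hint k) (M k)
    have hfin : P {ω | M k ≤ X k ω} ≠ ⊤ := measure_ne_top P _
    have : P {ω | M k ≤ X k ω} ≤ ENNReal.ofReal ((∫ ω, X k ω ∂P) / M k) := by
      rw [← ENNReal.ofReal_toReal hfin]
      apply ENNReal.ofReal_le_ofReal
      rw [le_div_iff₀ (hMpos k), mul_comm]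
      exact hmk
    exact this.trans (ENNReal.ofReal_le_ofReal (hratio k))
  -- the good set is the complement of the union of bad events
  set G : Set Ω := {ω | ∀ k : ℕ, X k ω ≤ M k} with hGdef
  have hGmeas : MeasurableSet G := by
    have : G = ⋂ k, {ω | X k ω ≤ M k} := by ext ω; simp [hGdef, Set.mem_iInter]
    rw [this]
    exact MeasurableSet.iInter fun k => measurableSet_le (hmeas k) measurable_const
  have hGc : Gᶜ = ⋃ k, {ω | M k < X k ω} := by
    ext ω; simp [hGdef, not_forall, not_le]
  have hbad : P Gᶜ ≤ ENNReal.ofReal δ := by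
    rw [hGc]
    refine (measure_iUnion_le _).trans ?_
    calc (∑' k, P {ω | M k < X k ω}) ≤ ∑' k, ENNReal.ofReal (δ / t ^ 2 * r ^ k) :=
          ENNReal.tsum_le_tsum hmarkov
      _ = ENNReal.ofReal (∑' k, δ / t ^ 2 * r ^ k) := by
          rw [ENNReal.ofReal_tsum_of_nonneg]
          · intro k; positivity
          · exact (summable_geometric_of_lt_one hrpos hrlt).mul_left _
      _ = ENNReal.ofReal δ := by
          congr 1
          rw [tsum_mul_left, tsum_geometric_of_lt_one hrpos hrlt]
          have : (1:ℝ) - r = 1 / t ^ 2 := by rw [hrdef]; ring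
          rw [this]
          field_simp
  have hc : P Gᶜ = 1 - P G := prob_compl_eq_one_sub hGmeas
  have h1G : (1:ENNReal) - P G ≤ ENNReal.ofReal δ := by rw [← hc]; exact hbad
  have h1le : (1:ENNReal) ≤ P G + ENNReal.ofReal δ := tsub_le_iff_left.mp h1G
  have heq : ENNReal.ofReal (1 - δ) = 1 - ENNReal.ofReal δ := by
    rw [← ENNReal.ofReal_one, ← ENNReal.ofReal_sub _ (le_of_lt hδ0)]
  rw [heq]
  exact tsub_le_iff_left.mpr (by rwa [add_comm] at h1le)
end

section
/- Let 0 < m ≤ L be reals, let A be a real symmetric d×d matrix with m·I_d ⪯ A ⪯ L·I_d, let G be symmetric with G ⪰ A, let τ ∈ [0,1], and let u ∈ ℝ^d with u ≠ 0. Then σ_A(Broyd_τ(G, A, u)) ≤ σ_A(G) − (1/L) · (uᵀ(G−A)u)/(uᵀ u). -/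
open Matrix

/-- The Broyden family quasi-Newton update `Broyd_τ(G, A, u)`. -/
noncomputable def Broyd {d : ℕ} (τ : ℝ) (G A : Matrix (Fin d) (Fin d) ℝ) (u : Fin d → ℝ) :
    Matrix (Fin d) (Fin d) ℝ :=
  if G *ᵥ u = A *ᵥ u then G
  else
    τ • (G - (u ⬝ᵥ (A *ᵥ u))⁻¹ •
            (vecMulVec (A *ᵥ u) (u ᵥ* G) + vecMulVec (G *ᵥ u) (u ᵥ* A))
          + ((u ⬝ᵥ (G *ᵥ u)) / (u ⬝ᵥ (A *ᵥ u)) + 1) •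
            ((u ⬝ᵥ (A *ᵥ u))⁻¹ • vecMulVec (A *ᵥ u) (u ᵥ* A)))
      + (1 - τ) • (G - (u ⬝ᵥ ((G - A) *ᵥ u))⁻¹ •
            vecMulVec ((G - A) *ᵥ u) (u ᵥ* (G - A)))

lemma trace_vecMulVec_mul {d : ℕ} (x y : Fin d → ℝ) (M : Matrix (Fin d) (Fin d) ℝ) :
    ((vecMulVec x y) * M).trace = y ⬝ᵥ (M *ᵥ x) := by
  simp only [Matrix.trace, Matrix.diag, Matrix.mul_apply, vecMulVec_apply, dotProduct,
    Matrix.mulVec, Finset.mul_sum]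
  rw [Finset.sum_comm]
  exact Finset.sum_congr rfl fun j _ => Finset.sum_congr rfl fun i _ => by ring

lemma psd_cauchy {d : ℕ} {M : Matrix (Fin d) (Fin d) ℝ} (hM : M.PosSemidef)
    (x y : Fin d → ℝ) :
    (x ⬝ᵥ (M *ᵥ y))^2 ≤ (x ⬝ᵥ (M *ᵥ x)) * (y ⬝ᵥ (M *ᵥ y)) := by
  have hMt : Mᵀ = M := by
    have := hM.1
    rwa [Matrix.IsHermitian, conjTranspose_eq_transpose_of_trivial] at this
  have hsymm : ∀ a b : Fin d → ℝ, a ⬝ᵥ (M *ᵥ b) = b ⬝ᵥ (M *ᵥ a) := by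
    intro a b
    rw [dotProduct_mulVec, ← vecMul_transpose, hMt, dotProduct_comm]
  have hq : ∀ t : ℝ, 0 ≤ (y ⬝ᵥ (M *ᵥ y)) * (t * t)
      + (2 * (x ⬝ᵥ (M *ᵥ y))) * t + (x ⬝ᵥ (M *ᵥ x)) := by
    intro t
    have h0 := hM.dotProduct_mulVec_nonneg (x + t • y)
    simp only [star_trivial] at h0
    have hexp : (x + t • y) ⬝ᵥ (M *ᵥ (x + t • y))
        = (y ⬝ᵥ (M *ᵥ y)) * (t * t) + (2 * (x ⬝ᵥ (M *ᵥ y))) * t + (x ⬝ᵥ (M *ᵥ x)) := by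
      rw [mulVec_add, mulVec_smul, dotProduct_add, add_dotProduct, add_dotProduct,
        dotProduct_smul, smul_dotProduct, smul_dotProduct, dotProduct_smul,
        hsymm y x]
      simp [smul_eq_mul]; ring
    linarith [hexp ▸ h0]
  have := discrim_le_zero hq
  rw [discrim] at this
  nlinarith [this]

/-- One-step decrease bound for `σ_A` under the Broyden family update:
`σ_A(Broyd_τ(G,A,u)) ≤ σ_A(G) − (1/L)·(uᵀ(G−A)u)/(uᵀu)`. -/
theorem sigma_broyden_decrease_bound
    {d : ℕ} {m L : ℝ} (hm : 0 < m) (hmL : m ≤ L)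
    {A : Matrix (Fin d) (Fin d) ℝ} (hAsymm : A.IsSymm)
    (hAlow : (A - m • (1 : Matrix (Fin d) (Fin d) ℝ)).PosSemidef)
    (hAup : (L • (1 : Matrix (Fin d) (Fin d) ℝ) - A).PosSemidef)
    {G : Matrix (Fin d) (Fin d) ℝ} (hGsymm : G.IsSymm) (hGA : (G - A).PosSemidef)
    {τ : ℝ} (hτ : τ ∈ Set.Icc (0 : ℝ) 1)
    {u : Fin d → ℝ} (hu : u ≠ 0) :
    sigmaA A (Broyd τ G A u) ≤
      sigmaA A G - 1 / L * ((u ⬝ᵥ ((G - A) *ᵥ u)) / (u ⬝ᵥ u)) := by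
  obtain ⟨hτ0, hτ1⟩ := hτ
  have hL : 0 < L := lt_of_lt_of_le hm hmL
  have hdsn : ∀ x : Fin d → ℝ, 0 ≤ x ⬝ᵥ x := fun x => by
    simpa using dotProduct_self_star_nonneg x
  -- A is positive definite
  have hmI : (m • (1 : Matrix (Fin d) (Fin d) ℝ)).PosDef := by
    refine Matrix.PosDef.of_dotProduct_mulVec_pos ?_ fun x hx => ?_
    · rw [Matrix.IsHermitian, conjTranspose_eq_transpose_of_trivial, transpose_smul,
        transpose_one]
    · have hx2 : 0 < x ⬝ᵥ x := by
        rcases lt_or_eq_of_le (hdsn x) with h | h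
        · exact h
        · exact absurd (dotProduct_self_eq_zero.mp h.symm) hx
      simp only [star_trivial, smul_mulVec, one_mulVec, dotProduct_smul, smul_eq_mul]
      positivity
  have hA : A.PosDef := by
    have := hmI.add_posSemidef hAlow
    rwa [add_sub_cancel] at this
  have hdet : IsUnit A.det := hA.det_pos.ne'.isUnit
  have hAA : A * A⁻¹ = 1 := mul_nonsing_inv A hdet
  have hA'A : A⁻¹ * A = 1 := nonsing_inv_mul A hdet
  have key1 : A⁻¹ *ᵥ (A *ᵥ u) = u := by rw [mulVec_mulVec, hA'A, one_mulVec]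
  have key2 : ∀ w : Fin d → ℝ, A *ᵥ (A⁻¹ *ᵥ w) = w := fun w => by
    rw [mulVec_mulVec, hAA, one_mulVec]
  have hn : 0 < u ⬝ᵥ u := by
    rcases lt_or_eq_of_le (hdsn u) with h | h
    · exact h
    · exact absurd (dotProduct_self_eq_zero.mp h.symm) hu
  have hs : 0 < u ⬝ᵥ (A *ᵥ u) := by
    have := hA.dotProduct_mulVec_pos hu; simpa using this
  have hp0 : 0 ≤ u ⬝ᵥ ((G - A) *ᵥ u) := by
    have := hGA.dotProduct_mulVec_nonneg u; simpa using this
  have hsLn : u ⬝ᵥ (A *ᵥ u) ≤ L * (u ⬝ᵥ u) := by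
    have := hAup.dotProduct_mulVec_nonneg u
    simp only [star_trivial, sub_mulVec, smul_mulVec, one_mulVec, dotProduct_sub,
      dotProduct_smul, smul_eq_mul] at this
    linarith
  by_cases h : G *ᵥ u = A *ᵥ u
  · have hp : u ⬝ᵥ ((G - A) *ᵥ u) = 0 := by
      rw [sub_mulVec, h, sub_self, dotProduct_zero]
    rw [hp]
    simp [Broyd, if_pos h]
  · -- abbreviations
    set s := u ⬝ᵥ (A *ᵥ u) with hs_def
    set g := u ⬝ᵥ (G *ᵥ u) with hg_def
    set p := u ⬝ᵥ ((G - A) *ᵥ u) with hp_def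
    set v := (G - A) *ᵥ u with hv_def
    set q := v ⬝ᵥ (A⁻¹ *ᵥ v) with hq_def
    have hvu : p = u ⬝ᵥ v := rfl
    have hGAsymm : (G - A)ᵀ = G - A := by rw [transpose_sub, hGsymm.eq, hAsymm.eq]
    have hvMu : u ᵥ* (G - A) = v := by rw [← mulVec_transpose, hGAsymm]
    have hp_pos : 0 < p := by
      rcases lt_or_eq_of_le hp0 with hpos | heq
      · exact hpos
      · exfalso
        have hcs := psd_cauchy hGA v u
        rw [← hv_def, ← hvu] at hcs
        rw [← heq, mul_zero] at hcs
        have hvv : v ⬝ᵥ v ≤ 0 := by nlinarith [hcs]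
        have hveq : v = 0 := dotProduct_self_eq_zero.mp (le_antisymm hvv (hdsn v))
        have hv0 : G *ᵥ u - A *ᵥ u = 0 := by
          rw [← sub_mulVec, ← hv_def]; exact hveq
        exact h (sub_eq_zero.mp hv0)
    have hgs : g - s = p := by rw [hp_def, hv_def, sub_mulVec, dotProduct_sub]
    -- trace computations
    have e1 : ((vecMulVec (A *ᵥ u) (u ᵥ* G)) * A⁻¹).trace = g := by
      rw [trace_vecMulVec_mul, key1]
      exact (dotProduct_mulVec u G u).symm
    have e2 : ((vecMulVec (G *ᵥ u) (u ᵥ* A)) * A⁻¹).trace = g := by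
      rw [trace_vecMulVec_mul, ← dotProduct_mulVec, key2]
    have e3 : ((vecMulVec (A *ᵥ u) (u ᵥ* A)) * A⁻¹).trace = s := by
      rw [trace_vecMulVec_mul, key1]
      exact (dotProduct_mulVec u A u).symm
    have e4 : ((vecMulVec v (u ᵥ* (G - A))) * A⁻¹).trace = q := by
      rw [trace_vecMulVec_mul, hvMu]
    -- value of sigmaA of the update
    have hval : sigmaA A (Broyd τ G A u)
        = sigmaA A G - (τ * (p / s) + (1 - τ) * (q / p)) := by
      have hif : Broyd τ G A u
          = τ • (G - s⁻¹ •
              (vecMulVec (A *ᵥ u) (u ᵥ* G) + vecMulVec (G *ᵥ u) (u ᵥ* A))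
            + (g / s + 1) • (s⁻¹ • vecMulVec (A *ᵥ u) (u ᵥ* A)))
          + (1 - τ) • (G - p⁻¹ • vecMulVec v (u ᵥ* (G - A))) := by
        rw [Broyd, if_neg h]
      set X := G - s⁻¹ • (vecMulVec (A *ᵥ u) (u ᵥ* G) + vecMulVec (G *ᵥ u) (u ᵥ* A))
          + (g / s + 1) • (s⁻¹ • vecMulVec (A *ᵥ u) (u ᵥ* A)) with hX_def
      set Y := G - p⁻¹ • vecMulVec v (u ᵥ* (G - A)) with hY_def
      have hdecomp : Broyd τ G A u - A = τ • (X - A) + (1 - τ) • (Y - A) := by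
        rw [hif]; module
      have hXtr : ((X - A) * A⁻¹).trace = sigmaA A G - (g - s) / s := by
        have hXre : X - A = (G - A) - s⁻¹ •
            (vecMulVec (A *ᵥ u) (u ᵥ* G) + vecMulVec (G *ᵥ u) (u ᵥ* A))
            + (g / s + 1) • (s⁻¹ • vecMulVec (A *ᵥ u) (u ᵥ* A)) := by
          rw [hX_def]; module
        rw [hXre, add_mul, sub_mul, smul_mul_assoc, smul_mul_assoc, smul_mul_assoc,
          add_mul, trace_add, trace_sub, trace_smul, trace_smul, trace_smul, trace_add,
          e1, e2, e3, sigmaA]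
        simp only [smul_eq_mul]
        field_simp
        ring
      have hYtr : ((Y - A) * A⁻¹).trace = sigmaA A G - p⁻¹ * q := by
        have hYre : Y - A = (G - A) - p⁻¹ • vecMulVec v (u ᵥ* (G - A)) := by
          rw [hY_def]; module
        rw [hYre, sub_mul, smul_mul_assoc, trace_sub, trace_smul, e4, sigmaA, smul_eq_mul]
      rw [sigmaA, hdecomp, add_mul, smul_mul_assoc, smul_mul_assoc, trace_add,
        trace_smul, trace_smul, smul_eq_mul, smul_eq_mul, hXtr, hYtr, hgs]
      ring
    -- the bounds
    have hLn : 0 < L * (u ⬝ᵥ u) := by positivity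
    have hb1 : p / (L * (u ⬝ᵥ u)) ≤ p / s := by
      apply div_le_div_of_nonneg_left hp0 hs hsLn
    have hpsq : p ^ 2 ≤ s * q := by
      have hcs := psd_cauchy hA.posSemidef u (A⁻¹ *ᵥ v)
      rw [key2] at hcs
      have hwq : (A⁻¹ *ᵥ v) ⬝ᵥ v = q := dotProduct_comm _ _
      rw [hwq, ← hvu] at hcs
      exact hcs
    have hq0 : 0 ≤ q := by
      have := hA.inv.posSemidef.dotProduct_mulVec_nonneg v; simpa using this
    have hb2 : p / (L * (u ⬝ᵥ u)) ≤ q / p := by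
      rw [div_le_div_iff₀ hLn hp_pos]
      nlinarith [hpsq, hq0, hsLn, hs, hn]
    rw [hval]
    have hrhs : 1 / L * (p / (u ⬝ᵥ u)) = p / (L * (u ⬝ᵥ u)) := by
      field_simp
    rw [hrhs]
    nlinarith [hb1, hb2, hτ0, hτ1, mul_le_mul_of_nonneg_left hb1 hτ0,
      mul_le_mul_of_nonneg_left hb2 (by linarith : (0:ℝ) ≤ 1 - τ)]
end
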